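/- arXiv:1001.1188 — 6 statements merged into one kernel-verified Lean document; each statement's English description precedes it below -/
import Mathlib

section
/- Let A be a finite ring and M, N_1, N_2 finite left A-modules such that M ≅ N_1 ⊕ N_2, Hom_A(N_1, N_2) = 0 and Hom_A(N_2, N_1) = 0. Then the number of submodules L of M with L ≅ N_2 and M/L ≅ N_1 equals 1. -/
/-- The Hall number `G^M_{N L}`: the number of submodules `U ⊆ M` with
`U ≅ L` and `M/U ≅ N`. -/
noncomputable def hallNum (A : Type*) [Ring A] (M N L : Type*)
    [AddCommGroup M] [Module A M] [AddCommGroup N] [Module A N]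
    [AddCommGroup L] [Module A L] : ℕ :=
  Nat.card {U : Submodule A M // Nonempty (U ≃ₗ[A] L) ∧ Nonempty ((M ⧸ U) ≃ₗ[A] N)}

theorem hallNum_eq_one_of_no_homs
    (A : Type*) [Ring A] [Finite A]
    (M N₁ N₂ : Type*)
    [AddCommGroup M] [Module A M] [Finite M]
    [AddCommGroup N₁] [Module A N₁] [Finite N₁]
    [AddCommGroup N₂] [Module A N₂] [Finite N₂]
    (hM : Nonempty (M ≃ₗ[A] N₁ × N₂))
    (h12 : ∀ f : N₁ →ₗ[A] N₂, f = 0)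
    (h21 : ∀ f : N₂ →ₗ[A] N₁, f = 0) :
    hallNum A M N₁ N₂ = 1 := by
  obtain ⟨e⟩ := hM
  set π₁ : M →ₗ[A] N₁ := (LinearMap.fst A N₁ N₂).comp e.toLinearMap with hπ₁
  set W : Submodule A M := LinearMap.ker π₁ with hW
  have hmemW : ∀ x : M, x ∈ W ↔ (e x).1 = 0 := fun x => Iff.rfl
  -- uniqueness
  have key : ∀ U : Submodule A M, Nonempty (U ≃ₗ[A] N₂) →
      Nonempty ((M ⧸ U) ≃ₗ[A] N₁) → U = W := by
    rintro U ⟨f⟩ ⟨g⟩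
    apply le_antisymm
    · intro x hx
      have hz : (π₁.comp U.subtype).comp (f.symm : N₂ →ₗ[A] U) = 0 := h21 _
      have h0 := congrArg (fun φ : N₂ →ₗ[A] N₁ => φ (f ⟨x, hx⟩)) hz
      have h1 : π₁ x = 0 := by simpa using h0
      exact h1
    · intro x hx
      have hz : (((g : (M ⧸ U) →ₗ[A] N₁).comp U.mkQ).comp
          (e.symm : N₁ × N₂ →ₗ[A] M)).comp (LinearMap.inr A N₁ N₂) = 0 := h21 _
      have hx0 : (e x).1 = 0 := (hmemW x).mp hx
      have hex : e.symm ((0 : N₁), (e x).2) = x := by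
        have : ((0 : N₁), (e x).2) = e x := by
          ext
          · simp [hx0]
          · rfl
        rw [this, e.symm_apply_apply]
      have h0 := congrArg (fun φ : N₂ →ₗ[A] N₁ => φ ((e x).2)) hz
      simp only [LinearMap.comp_apply, LinearMap.inr_apply, LinearMap.zero_apply] at h0
      simp only [LinearEquiv.coe_coe] at h0
      rw [hex] at h0
      have hq : U.mkQ x = 0 := g.injective (by simpa using h0)
      simpa [Submodule.mkQ_apply, Submodule.Quotient.mk_eq_zero] using hq
  -- existence: W works
  have hWN₂ : Nonempty (W ≃ₗ[A] N₂) := by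
    refine ⟨LinearEquiv.ofBijective
      (((LinearMap.snd A N₁ N₂).comp e.toLinearMap).comp W.subtype) ⟨?_, ?_⟩⟩
    · intro x y hxy
      have hx : (e (x : M)).1 = 0 := (hmemW _).mp x.2
      have hy : (e (y : M)).1 = 0 := (hmemW _).mp y.2
      have : e (x : M) = e (y : M) := by
        ext
        · rw [hx, hy]
        · exact hxy
      exact Subtype.ext (e.injective this)
    · intro y
      refine ⟨⟨e.symm ((0 : N₁), y), ?_⟩, ?_⟩
      · show (e (e.symm ((0 : N₁), y))).1 = 0
        simp
      · show (e (e.symm ((0 : N₁), y))).2 = y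
        simp
  have hsurj : Function.Surjective π₁ := fun y =>
    ⟨e.symm (y, 0), by simp [hπ₁]⟩
  have hQW : Nonempty ((M ⧸ W) ≃ₗ[A] N₁) :=
    ⟨π₁.quotKerEquivOfSurjective hsurj⟩
  rw [hallNum, Nat.card_eq_one_iff_unique]
  constructor
  · constructor
    intro a b
    apply Subtype.ext
    rw [key a.1 a.2.1 a.2.2, key b.1 b.2.1 b.2.2]
  · exact ⟨⟨W, hWN₂, hQW⟩⟩
end

section
/- Let A be a finite ring and M, N, L finite A-modules. Then the number of submodules U ⊆ M with U ≅ L and M/U ≅ N equals |Ext^1_A(N,L)_M| · |Aut_A(M)| / (|Aut_A(N)| · |Aut_A(L)| · |Hom_A(N,L)|), where Ext^1_A(N,L)_M denotes the set of equivalence classes of extensions of N by L with middle term isomorphic to M. -/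
/-- Short exact sequences `0 → L → M → N → 0` with middle term `M`. -/
def ExtPairs (A : Type*) [Ring A] (M N L : Type*)
    [AddCommGroup M] [Module A M] [AddCommGroup N] [Module A N]
    [AddCommGroup L] [Module A L] : Type _ :=
  {p : (L →ₗ[A] M) × (M →ₗ[A] N) //
    Function.Injective p.1 ∧ Function.Surjective p.2 ∧
      LinearMap.range p.1 = LinearMap.ker p.2}

/-- Equivalence of extensions: an isomorphism of the middle terms commuting with
the maps from `L` and to `N`. -/
def ExtPairs.Equiv (A : Type*) [Ring A] (M N L : Type*)
    [AddCommGroup M] [Module A M] [AddCommGroup N] [Module A N]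
    [AddCommGroup L] [Module A L]
    (p q : ExtPairs A M N L) : Prop :=
  ∃ φ : M ≃ₗ[A] M, (φ : M →ₗ[A] M) ∘ₗ p.1.1 = q.1.1 ∧
    q.1.2 ∘ₗ (φ : M →ₗ[A] M) = p.1.2

/-- `Ext¹_A(N, L)_M`: equivalence classes of extensions of `N` by `L` whose middle
term is (isomorphic to) `M`. -/
def ExtClasses (A : Type*) [Ring A] (M N L : Type*)
    [AddCommGroup M] [Module A M] [AddCommGroup N] [Module A N]
    [AddCommGroup L] [Module A L] : Type _ :=
  Quot (ExtPairs.Equiv A M N L)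

namespace Riedtmann

variable {A : Type*} [Ring A] {M N L : Type*}
    [AddCommGroup M] [Module A M] [AddCommGroup N] [Module A N]
    [AddCommGroup L] [Module A L]

/-- The first map of an extension pair. -/
abbrev i (p : ExtPairs A M N L) : L →ₗ[A] M := p.1.1
/-- The second map of an extension pair. -/
abbrev π (p : ExtPairs A M N L) : M →ₗ[A] N := p.1.2

lemma i_inj (p : ExtPairs A M N L) : Function.Injective (i p) := p.2.1
lemma π_surj (p : ExtPairs A M N L) : Function.Surjective (π p) := p.2.2.1
lemma range_eq_ker (p : ExtPairs A M N L) :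
    LinearMap.range (i p) = LinearMap.ker (π p) := p.2.2.2

lemma π_i (p : ExtPairs A M N L) (l : L) : π p (i p l) = 0 := by
  have : i p l ∈ LinearMap.ker (π p) := by
    rw [← range_eq_ker p]; exact LinearMap.mem_range_self _ l
  exact this

/-- The canonical iso `M ⧸ range i ≃ N` induced by `π`. -/
noncomputable def quotIso (p : ExtPairs A M N L) :
    (M ⧸ LinearMap.range (i p)) ≃ₗ[A] N :=
  LinearEquiv.ofBijective
    (Submodule.liftQ _ (π p) (le_of_eq (range_eq_ker p)))
    ⟨by
      rw [← LinearMap.ker_eq_bot]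
      exact Submodule.ker_liftQ_eq_bot _ _ _ (le_of_eq (range_eq_ker p).symm),
     by
      rw [← LinearMap.range_eq_top, Submodule.range_liftQ, LinearMap.range_eq_top]
      exact π_surj p⟩

@[simp] lemma quotIso_mk (p : ExtPairs A M N L) (m : M) :
    quotIso p (Submodule.Quotient.mk m) = π p m := by
  rfl

@[simp] lemma quotIso_symm_π (p : ExtPairs A M N L) (m : M) :
    (quotIso p).symm (π p m) = Submodule.Quotient.mk m := by
  rw [← quotIso_mk p m, LinearEquiv.symm_apply_apply]

/-! ### The action of `Aut M` on `ExtPairs` -/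

/-- `Aut M` acts on extension pairs. -/
def act (φ : M ≃ₗ[A] M) (p : ExtPairs A M N L) : ExtPairs A M N L :=
  ⟨((φ : M →ₗ[A] M) ∘ₗ i p, π p ∘ₗ (φ.symm : M →ₗ[A] M)),
    φ.injective.comp (i_inj p),
    (π_surj p).comp φ.symm.surjective, by
      rw [LinearMap.range_comp, LinearMap.ker_comp, range_eq_ker p]
      exact (Submodule.map_equiv_eq_comap_symm φ _)⟩

@[simp] lemma act_i (φ : M ≃ₗ[A] M) (p : ExtPairs A M N L) (l : L) :
    i (act φ p) l = φ (i p l) := rfl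

@[simp] lemma act_π (φ : M ≃ₗ[A] M) (p : ExtPairs A M N L) (m : M) :
    π (act φ p) m = π p (φ.symm m) := rfl

lemma ext_pairs_ext {p q : ExtPairs A M N L}
    (h1 : ∀ l, i p l = i q l) (h2 : ∀ m, π p m = π q m) : p = q := by
  apply Subtype.ext
  exact Prod.ext (LinearMap.ext h1) (LinearMap.ext h2)

lemma act_act (φ ψ : M ≃ₗ[A] M) (p : ExtPairs A M N L) :
    act ψ (act φ p) = act (φ.trans ψ) p := by
  apply ext_pairs_ext <;> intro x <;> simp

@[simp] lemma act_refl (p : ExtPairs A M N L) :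
    act (LinearEquiv.refl A M) p = p := by
  apply ext_pairs_ext <;> intro x <;> simp

lemma equiv_iff_exists_act (p q : ExtPairs A M N L) :
    ExtPairs.Equiv A M N L p q ↔ ∃ φ : M ≃ₗ[A] M, act φ p = q := by
  constructor
  · rintro ⟨φ, h1, h2⟩
    refine ⟨φ, ext_pairs_ext (fun l => ?_) (fun m => ?_)⟩
    · exact congrFun (congrArg DFunLike.coe h1) l
    · have := congrFun (congrArg DFunLike.coe h2) (φ.symm m)
      simpa using this.symm
  · rintro ⟨φ, rfl⟩
    refine ⟨φ, rfl, ?_⟩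
    ext m
    simp

lemma equiv_equivalence : Equivalence (ExtPairs.Equiv A M N L) := by
  constructor
  · intro p
    rw [equiv_iff_exists_act]
    exact ⟨LinearEquiv.refl A M, act_refl p⟩
  · intro p q h
    rw [equiv_iff_exists_act] at h ⊢
    obtain ⟨φ, rfl⟩ := h
    exact ⟨φ.symm, by rw [act_act, LinearEquiv.self_trans_symm, act_refl]⟩
  · intro p q r h h'
    rw [equiv_iff_exists_act] at h h' ⊢
    obtain ⟨φ, rfl⟩ := h
    obtain ⟨ψ, rfl⟩ := h'
    exact ⟨φ.trans ψ, (act_act φ ψ p).symm⟩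

lemma equiv_of_mk_eq {p q : ExtPairs A M N L}
    (h : Quot.mk (ExtPairs.Equiv A M N L) p = Quot.mk (ExtPairs.Equiv A M N L) q) :
    ∃ φ : M ≃ₗ[A] M, act φ p = q := by
  rw [← equiv_iff_exists_act]
  exact (equiv_equivalence.eqvGen_iff).mp (Quot.eq.mp h)

/-! ### The stabilizer of a pair is `Hom(N, L)` -/

/-- The automorphism `1 + i ∘ h ∘ π` attached to `h : N →ₗ[A] L`. -/
def toAut (p : ExtPairs A M N L) (h : N →ₗ[A] L) : M ≃ₗ[A] M :=
  LinearEquiv.ofLinear (LinearMap.id + i p ∘ₗ h ∘ₗ π p)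
    (LinearMap.id - i p ∘ₗ h ∘ₗ π p)
    (by ext m; simp [π_i])
    (by ext m; simp [π_i])

@[simp] lemma toAut_apply (p : ExtPairs A M N L) (h : N →ₗ[A] L) (m : M) :
    toAut p h m = m + i p (h (π p m)) := by
  simp [toAut]

@[simp] lemma toAut_symm_apply (p : ExtPairs A M N L) (h : N →ₗ[A] L) (m : M) :
    (toAut p h).symm m = m - i p (h (π p m)) := by
  simp [toAut]

lemma act_toAut (p : ExtPairs A M N L) (h : N →ₗ[A] L) :
    act (toAut p h) p = p := by
  apply ext_pairs_ext
  · intro l; simp [π_i]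
  · intro m; simp [π_i, map_sub]

/-- Given a stabilizing automorphism `φ`, recover `h : N →ₗ[A] L`. -/
noncomputable def toHom (p : ExtPairs A M N L) (φ : M ≃ₗ[A] M)
    (hst : act φ p = p) : N →ₗ[A] L :=
  (LinearEquiv.ofInjective (i p) (i_inj p)).symm.toLinearMap ∘ₗ
    LinearMap.codRestrict (LinearMap.range (i p))
      ((Submodule.liftQ (LinearMap.range (i p))
          ((φ : M →ₗ[A] M) - LinearMap.id)
          (by
            intro m hm
            obtain ⟨l, rfl⟩ := hm
            have : i (act φ p) l = i p l := by rw [hst]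
            simp only [act_i] at this
            simp [this])) ∘ₗ (quotIso p).symm.toLinearMap)
      (by
        intro n
        obtain ⟨m, rfl⟩ := π_surj p n
        have hπφ : ∀ x, π p (φ x) = π p x := by
          intro x
          have : π (act φ p) (φ x) = π p (φ x) := by rw [hst]
          simpa using this.symm
        simp only [LinearMap.comp_apply, LinearEquiv.coe_coe, quotIso_symm_π,
          Submodule.liftQ_apply, LinearMap.sub_apply, LinearMap.id_apply]
        rw [range_eq_ker p, LinearMap.mem_ker, map_sub, hπφ m, sub_self])

lemma i_toHom (p : ExtPairs A M N L) (φ : M ≃ₗ[A] M) (hst : act φ p = p)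
    (m : M) : i p (toHom p φ hst (π p m)) = φ m - m := by
  have key : ∀ y : LinearMap.range (i p),
      i p ((LinearEquiv.ofInjective (i p) (i_inj p)).symm y) = y := by
    rintro ⟨x, l, rfl⟩
    have : (LinearEquiv.ofInjective (i p) (i_inj p)) l = ⟨i p l, ⟨l, rfl⟩⟩ := by
      apply Subtype.ext
      simp [LinearEquiv.ofInjective_apply]
    rw [← this, LinearEquiv.symm_apply_apply]
    exact (LinearEquiv.ofInjective_apply (i p) l).symm
  simp only [toHom, LinearMap.comp_apply, LinearEquiv.coe_coe]
  rw [key]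
  simp [LinearMap.codRestrict_apply]

lemma toAut_toHom (p : ExtPairs A M N L) (φ : M ≃ₗ[A] M) (hst : act φ p = p) :
    toAut p (toHom p φ hst) = φ := by
  apply LinearEquiv.toLinearMap_injective
  ext m
  simp only [LinearEquiv.coe_coe, toAut_apply]
  rw [i_toHom p φ hst m]
  abel

lemma toHom_toAut (p : ExtPairs A M N L) (h : N →ₗ[A] L) :
    toHom p (toAut p h) (act_toAut p h) = h := by
  ext n
  obtain ⟨m, rfl⟩ := π_surj p n
  apply i_inj p
  rw [i_toHom p _ _ m]
  simp

/-- The stabilizer of `p` is in bijection with `Hom(N, L)`. -/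
noncomputable def stabEquivHom (p : ExtPairs A M N L) :
    {φ : M ≃ₗ[A] M // act φ p = p} ≃ (N →ₗ[A] L) where
  toFun x := toHom p x.1 x.2
  invFun h := ⟨toAut p h, act_toAut p h⟩
  left_inv x := Subtype.ext (toAut_toHom p x.1 x.2)
  right_inv h := toHom_toAut p h

/-! ### Fibers of `Quot.mk` -/

variable (A M N L) in
/-- For each extension class, (fiber of `Quot.mk` over it) × Hom(N,L) ≃ Aut M. -/
noncomputable def fiberProdEquiv (c : ExtClasses A M N L) :
    {p : ExtPairs A M N L // Quot.mk (ExtPairs.Equiv A M N L) p = c} × (N →ₗ[A] L)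
      ≃ (M ≃ₗ[A] M) := by
  classical
  obtain ⟨p₀, hp₀⟩ := Classical.indefiniteDescription _ (Quot.exists_rep c)
  let g : (M ≃ₗ[A] M) →
      {p : ExtPairs A M N L // Quot.mk (ExtPairs.Equiv A M N L) p = c} :=
    fun φ => ⟨act φ p₀, by
      rw [← hp₀]
      exact (Quot.sound ((equiv_iff_exists_act p₀ (act φ p₀)).mpr ⟨φ, rfl⟩)).symm⟩
  refine (Equiv.sigmaEquivProd _ _).symm.trans
    ((Equiv.sigmaCongrRight (fun q => ?_)).trans (Equiv.sigmaFiberEquiv g))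
  -- need : (N →ₗ[A] L) ≃ {φ // g φ = q}
  have hq : ∃ φ₀ : M ≃ₗ[A] M, act φ₀ p₀ = q.1 := by
    apply equiv_of_mk_eq
    rw [hp₀, q.2]
  obtain ⟨φ₀, hφ₀⟩ := Classical.indefiniteDescription _ hq
  refine (stabEquivHom p₀).symm.trans ?_
  refine ⟨fun x => ⟨x.1.trans φ₀, ?_⟩, fun y => ⟨y.1.trans φ₀.symm, ?_⟩, ?_, ?_⟩
  · apply Subtype.ext
    show act (x.1.trans φ₀) p₀ = q.1
    rw [← act_act, x.2, hφ₀]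
  · show act (y.1.trans φ₀.symm) p₀ = p₀
    have : act y.1 p₀ = q.1 := Subtype.ext_iff.mp y.2
    rw [← act_act, this, ← hφ₀, act_act, LinearEquiv.self_trans_symm, act_refl]
  · intro x
    apply Subtype.ext
    apply LinearEquiv.toLinearMap_injective
    ext m
    simp
  · intro y
    apply Subtype.ext
    apply LinearEquiv.toLinearMap_injective
    ext m
    simp

variable (A M N L) in
/-- Orbit-counting equivalence. -/
noncomputable def extPairsProdEquiv :
    ExtPairs A M N L × (N →ₗ[A] L) ≃ ExtClasses A M N L × (M ≃ₗ[A] M) :=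
  ((Equiv.sigmaFiberEquiv (Quot.mk (ExtPairs.Equiv A M N L))).symm.prodCongr
      (Equiv.refl _)).trans <|
    (Equiv.sigmaProdDistrib _ _).trans <|
      (Equiv.sigmaCongrRight (fiberProdEquiv A M N L)).trans
        (Equiv.sigmaEquivProd _ _)

/-! ### Counting `ExtPairs` by the submodule `range i` -/

variable (A M N L) in
/-- The subtype of submodules appearing in `hallNum`. -/
abbrev HallSub : Type _ :=
  {U : Submodule A M // Nonempty (U ≃ₗ[A] L) ∧ Nonempty ((M ⧸ U) ≃ₗ[A] N)}

variable (A M N L) in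
/-- From `(U, e, f)` build an extension pair. -/
def ofData : (Σ U : HallSub A M N L, (L ≃ₗ[A] U.1) × ((M ⧸ U.1) ≃ₗ[A] N)) →
    ExtPairs A M N L :=
  fun x =>
    ⟨(x.1.1.subtype ∘ₗ (x.2.1 : L →ₗ[A] x.1.1),
        (x.2.2 : (M ⧸ x.1.1) →ₗ[A] N) ∘ₗ x.1.1.mkQ),
      x.1.1.injective_subtype.comp x.2.1.injective,
      x.2.2.surjective.comp (Submodule.mkQ_surjective _), by
        rw [LinearMap.range_comp, LinearMap.ker_comp, LinearEquiv.range,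
          Submodule.map_subtype_top]
        rw [show LinearMap.ker (x.2.2 : (M ⧸ x.1.1) →ₗ[A] N) = ⊥ from
          LinearMap.ker_eq_bot.mpr x.2.2.injective]
        rw [Submodule.comap_bot, Submodule.ker_mkQ]⟩

lemma ofData_bijective : Function.Bijective (ofData A M N L) := by
  constructor
  · rintro ⟨⟨U, hU⟩, e, f⟩ ⟨⟨U', hU'⟩, e', f'⟩ h
    have hpair := Subtype.ext_iff.mp h
    have h1 : U.subtype ∘ₗ (e : L →ₗ[A] U) = U'.subtype ∘ₗ (e' : L →ₗ[A] U') :=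
      congrArg Prod.fst hpair
    have h2 : (f : (M ⧸ U) →ₗ[A] N) ∘ₗ U.mkQ = (f' : (M ⧸ U') →ₗ[A] N) ∘ₗ U'.mkQ :=
      congrArg Prod.snd hpair
    have hUU' : U = U' := by
      have : LinearMap.range (U.subtype ∘ₗ (e : L →ₗ[A] U))
          = LinearMap.range (U'.subtype ∘ₗ (e' : L →ₗ[A] U')) := by rw [h1]
      rwa [LinearMap.range_comp, LinearMap.range_comp, LinearEquiv.range,
        LinearEquiv.range, Submodule.map_subtype_top,
        Submodule.map_subtype_top] at this
    subst hUU'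
    have he : e = e' := by
      apply LinearEquiv.toLinearMap_injective
      ext l
      exact congrFun (congrArg DFunLike.coe h1) l
    have hf : f = f' := by
      apply LinearEquiv.toLinearMap_injective
      ext m
      exact congrFun (congrArg DFunLike.coe h2) m
    subst he; subst hf; rfl
  · intro p
    refine ⟨⟨⟨LinearMap.range (i p),
      ⟨(LinearEquiv.ofInjective (i p) (i_inj p)).symm⟩, ⟨quotIso p⟩⟩,
      LinearEquiv.ofInjective (i p) (i_inj p), quotIso p⟩, ?_⟩
    apply ext_pairs_ext
    · intro l
      show ((LinearEquiv.ofInjective (i p) (i_inj p)) l : M) = i p l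
      simp [LinearEquiv.ofInjective_apply]
    · intro m
      show quotIso p (Submodule.Quotient.mk m) = π p m
      simp

variable (A M N L) in
/-- Counting by the submodule: `ExtPairs ≃ HallSub × (Aut L × Aut N)`. -/
noncomputable def extPairsEquivHall :
    ExtPairs A M N L ≃ HallSub A M N L × ((L ≃ₗ[A] L) × (N ≃ₗ[A] N)) := by
  classical
  refine ((Equiv.ofBijective _ ofData_bijective).symm.trans
    (Equiv.sigmaCongrRight (fun U => ?_))).trans (Equiv.sigmaEquivProd _ _)
  have e₀ : (U.1 : Submodule A M) ≃ₗ[A] L := Classical.choice U.2.1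
  have f₀ : (M ⧸ (U.1 : Submodule A M)) ≃ₗ[A] N := Classical.choice U.2.2
  exact Equiv.prodCongr
    ⟨fun g => g.trans e₀, fun h => h.trans e₀.symm,
      fun g => by apply LinearEquiv.toLinearMap_injective; ext l; simp,
      fun h => by apply LinearEquiv.toLinearMap_injective; ext l; simp⟩
    ⟨fun g => f₀.symm.trans g, fun h => f₀.trans h,
      fun g => by apply LinearEquiv.toLinearMap_injective; ext x; simp,
      fun h => by apply LinearEquiv.toLinearMap_injective; ext x; simp⟩

end Riedtmann

/-- Riedtmann's formula:
`G^M_{NL} = |Ext¹_A(N,L)_M| ⬝ |Aut M| / (|Aut N| ⬝ |Aut L| ⬝ |Hom(N,L)|)`,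
stated multiplicatively. -/
theorem riedtmann_formula
    (A : Type*) [Ring A] [Finite A]
    (M N L : Type*)
    [AddCommGroup M] [Module A M] [Finite M]
    [AddCommGroup N] [Module A N] [Finite N]
    [AddCommGroup L] [Module A L] [Finite L] :
    hallNum A M N L *
      (Nat.card (N ≃ₗ[A] N) * Nat.card (L ≃ₗ[A] L) * Nat.card (N →ₗ[A] L)) =
    Nat.card (ExtClasses A M N L) * Nat.card (M ≃ₗ[A] M) := by
  have h1 : Nat.card (ExtPairs A M N L)
      = hallNum A M N L * (Nat.card (L ≃ₗ[A] L) * Nat.card (N ≃ₗ[A] N)) := by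
    rw [Nat.card_congr (Riedtmann.extPairsEquivHall A M N L), Nat.card_prod,
      Nat.card_prod]
    rfl
  have h2 : Nat.card (ExtPairs A M N L) * Nat.card (N →ₗ[A] L)
      = Nat.card (ExtClasses A M N L) * Nat.card (M ≃ₗ[A] M) := by
    rw [← Nat.card_prod, Nat.card_congr (Riedtmann.extPairsProdEquiv A M N L),
      Nat.card_prod]
  calc hallNum A M N L *
      (Nat.card (N ≃ₗ[A] N) * Nat.card (L ≃ₗ[A] L) * Nat.card (N →ₗ[A] L))
      = hallNum A M N L * (Nat.card (L ≃ₗ[A] L) * Nat.card (N ≃ₗ[A] N))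
          * Nat.card (N →ₗ[A] L) := by ring
    _ = Nat.card (ExtPairs A M N L) * Nat.card (N →ₗ[A] L) := by rw [h1]
    _ = Nat.card (ExtClasses A M N L) * Nat.card (M ≃ₗ[A] M) := h2
end

section
/- Let A be a finite-dimensional algebra over a finite field k with q elements, and let M, N, L be finite-dimensional A-modules. If Ext^1_A(N, L) is at most 1-dimensional over k and Hom_A(N, L) has dimension h, then G^M_{NL} ∈ {0, |Aut_A(N⊕L)|/(|Aut_A(N)|·|Aut_A(L)|·q^h), (q-1)·|Aut_A(M)|/(|Aut_A(N)|·|Aut_A(L)|·q^h) · (|Ext^1_A(N,L)_M|/(q-1))} where the last case requires M ≇ N ⊕ L; in particular each nonzero Ext class with middle term M contributes equally. -/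
open CategoryTheory

section Aux
variable {A : Type*} [Ring A] {M N L : Type*}
  [AddCommGroup M] [Module A M] [AddCommGroup N] [Module A N]
  [AddCommGroup L] [Module A L]

namespace HX

def mk' (i : L →ₗ[A] M) (pr : M →ₗ[A] N) (hi : Function.Injective i)
    (hs : Function.Surjective pr) (he : LinearMap.range i = LinearMap.ker pr) :
    ExtPairs A M N L := ⟨(i, pr), hi, hs, he⟩

theorem pi_iota (p : ExtPairs A M N L) (l : L) : p.1.2 (p.1.1 l) = 0 := by
  have : p.1.1 l ∈ LinearMap.ker p.1.2 := p.2.2.2 ▸ LinearMap.mem_range_self _ l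
  simpa using this

instance [Finite L] [Finite M] [Finite N] : Finite (ExtPairs A M N L) := by
  have h1 : Finite (L →ₗ[A] M) :=
    Finite.of_injective (fun f => (f : L → M)) DFunLike.coe_injective
  have h2 : Finite (M →ₗ[A] N) :=
    Finite.of_injective (fun f => (f : M → N)) DFunLike.coe_injective
  unfold ExtPairs
  infer_instance

instance [Finite L] [Finite M] [Finite N] : Finite (ExtClasses A M N L) := by
  unfold ExtClasses; exact Quot.finite _

instance finLEquiv [Finite M] : Finite (M ≃ₗ[A] M) :=
  Finite.of_injective (fun e => (e : M → M)) DFunLike.coe_injective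

theorem equivalence : Equivalence (ExtPairs.Equiv A M N L) := by
  constructor
  · intro p
    exact ⟨LinearEquiv.refl A M, by ext x; simp, by ext x; simp⟩
  · rintro p q ⟨φ, h1, h2⟩
    refine ⟨φ.symm, ?_, ?_⟩
    · ext l
      have e1 := LinearMap.congr_fun h1 l
      simp only [LinearMap.comp_apply, LinearEquiv.coe_coe] at e1 ⊢
      rw [← e1, LinearEquiv.symm_apply_apply]
    · ext x
      have e2 := LinearMap.congr_fun h2 (φ.symm x)
      simp only [LinearMap.comp_apply, LinearEquiv.coe_coe,
        LinearEquiv.apply_symm_apply] at e2 ⊢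
      exact e2.symm
  · rintro p q r ⟨φ, h1, h2⟩ ⟨ψ, h3, h4⟩
    refine ⟨φ.trans ψ, ?_, ?_⟩
    · ext l
      have e1 := LinearMap.congr_fun h1 l
      have e3 := LinearMap.congr_fun h3 l
      simp only [LinearMap.comp_apply, LinearEquiv.coe_coe] at e1 e3 ⊢
      rw [LinearEquiv.trans_apply, e1, e3]
    · ext x
      have e4 := LinearMap.congr_fun h4 (φ x)
      have e2 := LinearMap.congr_fun h2 x
      simp only [LinearMap.comp_apply, LinearEquiv.coe_coe] at e2 e4 ⊢
      rw [LinearEquiv.trans_apply, e4, e2]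

def asmul (φ : M ≃ₗ[A] M) (p : ExtPairs A M N L) : ExtPairs A M N L :=
  ⟨((φ : M →ₗ[A] M) ∘ₗ p.1.1, p.1.2 ∘ₗ (φ.symm : M →ₗ[A] M)),
    by
      refine ⟨φ.injective.comp p.2.1, p.2.2.1.comp φ.symm.surjective, ?_⟩
      ext x
      simp only [LinearMap.mem_range, LinearMap.mem_ker, LinearMap.comp_apply,
        LinearEquiv.coe_coe]
      constructor
      · rintro ⟨l, rfl⟩
        rw [LinearEquiv.symm_apply_apply]
        exact pi_iota p l
      · intro hx
        have : φ.symm x ∈ LinearMap.range p.1.1 := by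
          rw [p.2.2.2]; exact hx
        obtain ⟨l, hl⟩ := this
        exact ⟨l, by rw [hl, LinearEquiv.apply_symm_apply]⟩⟩

instance autAction : MulAction (M ≃ₗ[A] M) (ExtPairs A M N L) where
  smul := asmul
  one_smul p := by
    show asmul 1 p = p
    apply Subtype.ext
    apply Prod.ext <;> ext x <;> (simp only [asmul, LinearMap.comp_apply, LinearEquiv.coe_coe]; rfl)
  mul_smul φ ψ p := by
    show asmul (φ * ψ) p = asmul φ (asmul ψ p)
    apply Subtype.ext
    apply Prod.ext <;> ext x <;> (simp only [asmul, LinearMap.comp_apply, LinearEquiv.coe_coe]; rfl)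

theorem smul_def (φ : M ≃ₗ[A] M) (p : ExtPairs A M N L) :
    φ • p = asmul φ p := rfl

theorem equiv_iff_smul (p q : ExtPairs A M N L) :
    ExtPairs.Equiv A M N L p q ↔ ∃ φ : M ≃ₗ[A] M, φ • q = p := by
  constructor
  · intro h
    obtain ⟨φ, h1, h2⟩ := (equivalence (A := A)).symm h
    refine ⟨φ, Subtype.ext (Prod.ext h1 ?_)⟩
    show q.1.2 ∘ₗ (φ.symm : M →ₗ[A] M) = p.1.2
    ext x
    have := LinearMap.congr_fun h2 (φ.symm x)
    simp only [LinearMap.comp_apply, LinearEquiv.coe_coe,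
      LinearEquiv.apply_symm_apply] at this ⊢
    exact this.symm
  · rintro ⟨φ, rfl⟩
    refine (equivalence (A := A)).symm ⟨φ, rfl, ?_⟩
    show (asmul φ q).1.2 ∘ₗ (φ : M →ₗ[A] M) = q.1.2
    ext x
    simp [asmul]

open MulAction in
theorem card_counting (G X H : Type*) [Group G] [MulAction G X] [Finite G] [Finite X]
    (e : ∀ x : X, MulAction.stabilizer G x ≃ H) :
    Nat.card X * Nat.card H = Nat.card (orbitRel.Quotient G X) * Nat.card G := by
  have e2 : (X × H) ≃ (orbitRel.Quotient G X × G) :=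
    ((Equiv.prodCongr (selfEquivSigmaOrbits G X) (Equiv.refl H)).trans
      ((Equiv.sigmaProdDistrib _ H).trans
        ((Equiv.sigmaCongrRight (fun (ω : orbitRel.Quotient G X) =>
          (Equiv.prodCongr (orbitEquivQuotientStabilizer G ω.out) (e ω.out).symm).trans
            Subgroup.groupEquivQuotientProdSubgroup.symm)).trans
          (Equiv.sigmaEquivProd _ G))))
  have := Nat.card_congr e2
  simpa [Nat.card_prod] using this

noncomputable def extClassesEquiv :
    ExtClasses A M N L ≃ Quotient (MulAction.orbitRel (M ≃ₗ[A] M) (ExtPairs A M N L)) :=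
  Quot.congrRight (fun p q => by
    rw [equiv_iff_smul]
    rw [show ((MulAction.orbitRel (M ≃ₗ[A] M) (ExtPairs A M N L)) p q ↔
      p ∈ MulAction.orbit (M ≃ₗ[A] M) q) from MulAction.orbitRel_apply]
    exact MulAction.mem_orbit_iff.symm)

/-- Factor a map killing the image of ι through π. -/
noncomputable def factorThru (p : ExtPairs A M N L) {P : Type*} [AddCommGroup P] [Module A P]
    (ψ : M →ₗ[A] P) (hψ : ∀ l, ψ (p.1.1 l) = 0) :
    {g : N →ₗ[A] P // ∀ x, g (p.1.2 x) = ψ x} := by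
  have hle : LinearMap.ker p.1.2 ≤ LinearMap.ker ψ := by
    intro x hx
    rw [← p.2.2.2] at hx
    obtain ⟨l, rfl⟩ := hx
    exact hψ l
  refine ⟨((LinearMap.ker p.1.2).liftQ ψ hle) ∘ₗ
    ((p.1.2.quotKerEquivOfSurjective p.2.2.1).symm : N →ₗ[A] M ⧸ LinearMap.ker p.1.2), ?_⟩
  intro x
  have : (p.1.2.quotKerEquivOfSurjective p.2.2.1).symm (p.1.2 x) =
      Submodule.Quotient.mk x := by
    rw [LinearEquiv.symm_apply_eq]
    rfl
  simp only [LinearMap.comp_apply, LinearEquiv.coe_coe, this]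
  exact Submodule.liftQ_apply _ _ _

/-- Pull back a map with range inside the image of ι. -/
noncomputable def pullBack (p : ExtPairs A M N L) {P : Type*} [AddCommGroup P] [Module A P]
    (g : P →ₗ[A] M) (hg : ∀ x, g x ∈ LinearMap.range p.1.1) :
    {s : P →ₗ[A] L // ∀ x, p.1.1 (s x) = g x} := by
  refine ⟨((LinearEquiv.ofInjective p.1.1 p.2.1).symm : LinearMap.range p.1.1 →ₗ[A] L) ∘ₗ
    (g.codRestrict (LinearMap.range p.1.1) hg), ?_⟩
  intro x
  simp only [LinearMap.comp_apply, LinearEquiv.coe_coe]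
  have : ∀ y : LinearMap.range p.1.1,
      p.1.1 ((LinearEquiv.ofInjective p.1.1 p.2.1).symm y) = (y : M) := by
    intro y
    conv_rhs => rw [← (LinearEquiv.ofInjective p.1.1 p.2.1).apply_symm_apply y]
    rfl
  rw [this]
  rfl

/-- The "unipotent" automorphism 1 + ι s π. -/
noncomputable def unip (p : ExtPairs A M N L) (s : N →ₗ[A] L) : M ≃ₗ[A] M := by
  refine LinearEquiv.ofLinear (LinearMap.id + p.1.1 ∘ₗ s ∘ₗ p.1.2)
    (LinearMap.id - p.1.1 ∘ₗ s ∘ₗ p.1.2) ?_ ?_ <;>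
  · ext x
    simp only [LinearMap.comp_apply, LinearMap.add_apply, LinearMap.sub_apply,
      LinearMap.id_apply, map_sub, map_add, pi_iota, map_zero]
    abel

theorem unip_apply (p : ExtPairs A M N L) (s : N →ₗ[A] L) (x : M) :
    unip p s x = x + p.1.1 (s (p.1.2 x)) := rfl

theorem unip_mem_stab (p : ExtPairs A M N L) (s : N →ₗ[A] L) :
    unip p s ∈ MulAction.stabilizer (M ≃ₗ[A] M) p := by
  show unip p s • p = p
  rw [smul_def]
  apply Subtype.ext
  apply Prod.ext
  · ext l
    show unip p s (p.1.1 l) = p.1.1 l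
    rw [unip_apply, pi_iota, map_zero, map_zero, add_zero]
  · ext x
    show p.1.2 ((unip p s).symm x) = p.1.2 x
    have : (unip p s).symm x = x - p.1.1 (s (p.1.2 x)) := rfl
    rw [this, map_sub, pi_iota, sub_zero]

noncomputable def stabEquivHom (p : ExtPairs A M N L) :
    MulAction.stabilizer (M ≃ₗ[A] M) p ≃ (N →ₗ[A] L) := by
  refine (Equiv.ofBijective (fun s => ⟨unip p s, unip_mem_stab p s⟩ :
    (N →ₗ[A] L) → MulAction.stabilizer (M ≃ₗ[A] M) p) ⟨?_, ?_⟩).symm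
  · intro s t hst
    have h1 : unip p s = unip p t := congrArg Subtype.val hst
    ext n
    obtain ⟨x, rfl⟩ := p.2.2.1 n
    have := congrArg (fun e : M ≃ₗ[A] M => e x) h1
    simp only [unip_apply] at this
    exact p.2.1 (by simpa using this)
  · rintro ⟨φ, hφ⟩
    have hfst : (φ : M →ₗ[A] M) ∘ₗ p.1.1 = p.1.1 :=
      congrArg (fun r : ExtPairs A M N L => r.1.1) hφ
    have hsnd : p.1.2 ∘ₗ (φ.symm : M →ₗ[A] M) = p.1.2 :=
      congrArg (fun r : ExtPairs A M N L => r.1.2) hφ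
    have hπφ : ∀ x, p.1.2 (φ x) = p.1.2 x := by
      intro x
      have := LinearMap.congr_fun hsnd (φ x)
      simpa using this.symm
    set ψ : M →ₗ[A] M := (φ : M →ₗ[A] M) - LinearMap.id with hψdef
    have hψι : ∀ l, ψ (p.1.1 l) = 0 := by
      intro l
      have := LinearMap.congr_fun hfst l
      simp only [LinearMap.comp_apply, LinearEquiv.coe_coe] at this
      simp [hψdef, this]
    obtain ⟨g, hg⟩ := factorThru p ψ hψι
    have hrange : ∀ n, g n ∈ LinearMap.range p.1.1 := by
      intro n
      obtain ⟨x, rfl⟩ := p.2.2.1 n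
      rw [hg, p.2.2.2]
      simp [hψdef, hπφ]
    obtain ⟨s, hs⟩ := pullBack p g hrange
    refine ⟨s, Subtype.ext ?_⟩
    apply LinearEquiv.toLinearMap_injective
    ext x
    show unip p s x = φ x
    rw [unip_apply, hs, hg]
    simp [hψdef]

theorem cardE2 [Finite M] [Finite N] [Finite L] :
    Nat.card (ExtPairs A M N L) * Nat.card (N →ₗ[A] L) =
      Nat.card (ExtClasses A M N L) * Nat.card (M ≃ₗ[A] M) := by
  have h1 : Finite (N →ₗ[A] L) :=
    Finite.of_injective (fun f => (f : N → L)) DFunLike.coe_injective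
  rw [Nat.card_congr (extClassesEquiv (A := A) (M := M) (N := N) (L := L))]
  exact card_counting (M ≃ₗ[A] M) (ExtPairs A M N L) (N →ₗ[A] L) stabEquivHom

/-- The submodule attached to an extension pair. -/
noncomputable def toSub (p : ExtPairs A M N L) :
    {U : Submodule A M // Nonempty (U ≃ₗ[A] L) ∧ Nonempty ((M ⧸ U) ≃ₗ[A] N)} :=
  ⟨LinearMap.range p.1.1,
    ⟨(LinearEquiv.ofInjective p.1.1 p.2.1).symm⟩,
    ⟨(Submodule.quotEquivOfEq _ _ p.2.2.2).trans
      (p.1.2.quotKerEquivOfSurjective p.2.2.1)⟩⟩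

noncomputable def fiberEquivAux
    (u : {U : Submodule A M // Nonempty (U ≃ₗ[A] L) ∧ Nonempty ((M ⧸ U) ≃ₗ[A] N)}) :
    ((L ≃ₗ[A] u.1) × ((M ⧸ u.1) ≃ₗ[A] N)) ≃ {p : ExtPairs A M N L // toSub p = u} := by
  refine Equiv.ofBijective (fun ef => ⟨mk' (u.1.subtype ∘ₗ (ef.1 : L →ₗ[A] u.1))
    ((ef.2 : (M ⧸ u.1) →ₗ[A] N) ∘ₗ u.1.mkQ) ?_ ?_ ?_, ?_⟩) ⟨?_, ?_⟩
  · exact u.1.injective_subtype.comp ef.1.injective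
  · exact ef.2.surjective.comp (Submodule.mkQ_surjective u.1)
  · ext x
    simp only [LinearMap.mem_range, LinearMap.mem_ker, LinearMap.comp_apply,
      LinearEquiv.coe_coe]
    constructor
    · rintro ⟨l, rfl⟩
      have : u.1.mkQ ((ef.1 l : M)) = 0 := by
        rw [Submodule.mkQ_apply, Submodule.Quotient.mk_eq_zero]
        exact (ef.1 l).2
      rw [Submodule.coe_subtype, this, map_zero]
    · intro hx
      have hx' : u.1.mkQ x = 0 := by
        have := ef.2.injective (by simpa using hx : ef.2 (u.1.mkQ x) = ef.2 0)
        exact this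
      have hxu : x ∈ u.1 := by
        rwa [Submodule.mkQ_apply, Submodule.Quotient.mk_eq_zero] at hx'
      exact ⟨ef.1.symm ⟨x, hxu⟩, by simp⟩
  · apply Subtype.ext
    show LinearMap.range (u.1.subtype ∘ₗ (ef.1 : L →ₗ[A] u.1)) = u.1
    rw [LinearMap.range_comp, LinearEquiv.range, Submodule.map_top,
      Submodule.range_subtype]
  · rintro ⟨e, f⟩ ⟨e', f'⟩ hef
    have h1 := congrArg (fun r : {p : ExtPairs A M N L // toSub p = u} => r.1.1.1) hef
    have h2 := congrArg (fun r : {p : ExtPairs A M N L // toSub p = u} => r.1.1.2) hef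
    simp only [mk'] at h1 h2
    have he : e = e' := by
      apply LinearEquiv.toLinearMap_injective
      ext l
      have := LinearMap.congr_fun h1 l
      simp only [LinearMap.comp_apply, LinearEquiv.coe_coe, Submodule.coe_subtype] at this
      exact this
    have hf : f = f' := by
      apply LinearEquiv.toLinearMap_injective
      ext x
      exact LinearMap.congr_fun h2 x
    rw [he, hf]
  · rintro ⟨p, hp⟩
    have hrange : LinearMap.range p.1.1 = u.1 := congrArg Subtype.val hp
    have hker : u.1 = LinearMap.ker p.1.2 := hrange ▸ p.2.2.2
    refine ⟨⟨(LinearEquiv.ofInjective p.1.1 p.2.1).trans (LinearEquiv.ofEq _ _ hrange),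
      (Submodule.quotEquivOfEq _ _ hker).trans
        (p.1.2.quotKerEquivOfSurjective p.2.2.1)⟩, ?_⟩
    apply Subtype.ext
    apply Subtype.ext
    apply Prod.ext
    · ext l; rfl
    · ext x
      show ((Submodule.quotEquivOfEq _ _ hker).trans
        (p.1.2.quotKerEquivOfSurjective p.2.2.1)) (u.1.mkQ x) = p.1.2 x
      rw [LinearEquiv.trans_apply, Submodule.mkQ_apply, Submodule.quotEquivOfEq_mk]
      rfl

theorem cardE1 [Finite M] :
    Nat.card (ExtPairs A M N L) =
      Nat.card {U : Submodule A M // Nonempty (U ≃ₗ[A] L) ∧ Nonempty ((M ⧸ U) ≃ₗ[A] N)} *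
        (Nat.card (L ≃ₗ[A] L) * Nat.card (N ≃ₗ[A] N)) := by
  classical
  set S := {U : Submodule A M // Nonempty (U ≃ₗ[A] L) ∧ Nonempty ((M ⧸ U) ≃ₗ[A] N)}
  have e : ExtPairs A M N L ≃ S × ((L ≃ₗ[A] L) × (N ≃ₗ[A] N)) := by
    refine ((Equiv.sigmaFiberEquiv (toSub (A := A) (M := M) (N := N) (L := L))).symm.trans
      ((Equiv.sigmaCongrRight (fun u => ((fiberEquivAux u).symm.trans ?_))).trans
        (Equiv.sigmaEquivProd S _)))
    have e0 : (u.1 : Submodule A M) ≃ₗ[A] L := u.2.1.some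
    have f0 : (M ⧸ (u.1 : Submodule A M)) ≃ₗ[A] N := u.2.2.some
    exact Equiv.prodCongr
      (⟨fun f => f.trans e0, fun g => g.trans e0.symm, fun f => by ext; simp,
        fun g => by ext; simp⟩ :
        (L ≃ₗ[A] u.1) ≃ (L ≃ₗ[A] L))
      (⟨fun f => f0.symm.trans f, fun g => f0.trans g, fun f => by ext; simp,
        fun g => by ext; simp⟩ :
        ((M ⧸ u.1) ≃ₗ[A] N) ≃ (N ≃ₗ[A] N))
  rw [Nat.card_congr e, Nat.card_prod, Nat.card_prod]

section Split

/-- Splitting lemma: a section of π yields `M ≃ L × N`. -/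
noncomputable def splitEquiv (p : ExtPairs A M N L) (g : N →ₗ[A] M)
    (hg : ∀ n, p.1.2 (g n) = n) : M ≃ₗ[A] (L × N) := by
  have hmem : ∀ x, x - g (p.1.2 x) ∈ LinearMap.range p.1.1 := by
    intro x
    rw [p.2.2.2, LinearMap.mem_ker, map_sub, hg, sub_self]
  obtain ⟨r, hr⟩ := pullBack p (LinearMap.id - g ∘ₗ p.1.2) (fun x => by simpa using hmem x)
  have hr' : ∀ x, p.1.1 (r x) = x - g (p.1.2 x) := by
    intro x; rw [hr]; simp
  refine LinearEquiv.ofLinear (LinearMap.prod r p.1.2)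
    (p.1.1 ∘ₗ LinearMap.fst A L N + g ∘ₗ LinearMap.snd A L N) ?_ ?_
  · apply LinearMap.ext
    rintro ⟨l, n⟩
    apply Prod.ext
    · show r (p.1.1 l + g n) = l
      apply p.2.1
      rw [hr']
      simp [pi_iota, hg]
    · show p.1.2 (p.1.1 l + g n) = n
      simp [pi_iota, hg]
  · ext x
    show p.1.1 (r x) + g (p.1.2 x) = x
    rw [hr']
    abel

theorem splitEquiv_symm_apply (p : ExtPairs A M N L) (g : N →ₗ[A] M)
    (hg : ∀ n, p.1.2 (g n) = n) (l : L) (n : N) :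
    (splitEquiv p g hg).symm (l, n) = p.1.1 l + g n := rfl

theorem splitEquiv_snd (p : ExtPairs A M N L) (g : N →ₗ[A] M)
    (hg : ∀ n, p.1.2 (g n) = n) (x : M) :
    (splitEquiv p g hg x).2 = p.1.2 x := rfl

theorem splitEquiv_iota (p : ExtPairs A M N L) (g : N →ₗ[A] M)
    (hg : ∀ n, p.1.2 (g n) = n) (l : L) :
    splitEquiv p g hg (p.1.1 l) = (l, 0) := by
  rw [show ((l, 0) : L × N) = splitEquiv p g hg ((splitEquiv p g hg).symm (l, 0)) from
    ((splitEquiv p g hg).apply_symm_apply _).symm, splitEquiv_symm_apply]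
  simp

theorem equiv_of_sections (p p' : ExtPairs A M N L) (g g' : N →ₗ[A] M)
    (hg : ∀ n, p.1.2 (g n) = n) (hg' : ∀ n, p'.1.2 (g' n) = n) :
    ExtPairs.Equiv A M N L p p' := by
  refine ⟨(splitEquiv p g hg).trans (splitEquiv p' g' hg').symm, ?_, ?_⟩
  · ext l
    simp only [LinearMap.comp_apply, LinearEquiv.coe_coe, LinearEquiv.trans_apply,
      splitEquiv_iota, splitEquiv_symm_apply]
    simp
  · ext x
    simp only [LinearMap.comp_apply, LinearEquiv.coe_coe, LinearEquiv.trans_apply]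
    rw [← splitEquiv_snd p' g' hg' ((splitEquiv p' g' hg').symm (splitEquiv p g hg x)),
      LinearEquiv.apply_symm_apply, splitEquiv_snd]

theorem section_of_iso [Finite M] [Finite N] [Finite L]
    (p : ExtPairs A M N L) (e : M ≃ₗ[A] (N × L)) :
    ∃ g : N →ₗ[A] M, ∀ n, p.1.2 (g n) = n := by
  have hfin1 : Finite (N →ₗ[A] M) :=
    Finite.of_injective (fun f => (f : N → M)) DFunLike.coe_injective
  have hfin2 : Finite (N →ₗ[A] N) :=
    Finite.of_injective (fun f => (f : N → N)) DFunLike.coe_injective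
  have hfin3 : Finite (N →ₗ[A] L) :=
    Finite.of_injective (fun f => (f : N → L)) DFunLike.coe_injective
  set T : (N →ₗ[A] M) →+ (N →ₗ[A] N) :=
    AddMonoidHom.mk' (fun g => p.1.2 ∘ₗ g) (fun g g' => by ext n; simp) with hT
  have c1 : Nat.card (N →ₗ[A] M) = Nat.card (N →ₗ[A] N) * Nat.card (N →ₗ[A] L) := by
    have e1 : (N →ₗ[A] M) ≃ (N →ₗ[A] (N × L)) :=
      ⟨fun f => (e : M →ₗ[A] N × L) ∘ₗ f, fun f => (e.symm : N × L →ₗ[A] M) ∘ₗ f,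
        fun f => by ext n; simp, fun f => by ext n <;> simp⟩
    have e2 : (N →ₗ[A] (N × L)) ≃ ((N →ₗ[A] N) × (N →ₗ[A] L)) :=
      ⟨fun f => (LinearMap.fst A N L ∘ₗ f, LinearMap.snd A N L ∘ₗ f),
        fun ab => LinearMap.prod ab.1 ab.2,
        fun f => by ext n <;> simp, fun ab => by constructor <;> (ext n; simp)⟩
    rw [Nat.card_congr (e1.trans e2), Nat.card_prod]
  have c2 : Nat.card T.ker = Nat.card (N →ₗ[A] L) := by
    symm
    refine Nat.card_congr (Equiv.ofBijective
      (fun s => ⟨p.1.1 ∘ₗ s, by ext n; simp [hT, pi_iota]⟩ : (N →ₗ[A] L) → T.ker) ⟨?_, ?_⟩)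
    · intro s t hst
      have := congrArg (fun r : T.ker => r.1) hst
      ext n
      exact p.2.1 (LinearMap.congr_fun this n)
    · rintro ⟨g, hg⟩
      have hg0 : ∀ n, p.1.2 (g n) = 0 := by
        intro n
        have : p.1.2 ∘ₗ g = 0 := hg
        exact LinearMap.congr_fun this n
      have hmem : ∀ n, g n ∈ LinearMap.range p.1.1 := by
        intro n
        rw [p.2.2.2, LinearMap.mem_ker]
        exact hg0 n
      obtain ⟨s, hs⟩ := pullBack p g hmem
      exact ⟨s, Subtype.ext (by ext n; exact hs n)⟩
  have c3 : Nat.card (N →ₗ[A] M) = Nat.card ((N →ₗ[A] M) ⧸ T.ker) * Nat.card T.ker :=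
    AddSubgroup.card_eq_card_quotient_mul_card_addSubgroup T.ker
  have c4 : Nat.card ((N →ₗ[A] M) ⧸ T.ker) = Nat.card T.range :=
    Nat.card_congr (QuotientAddGroup.quotientKerEquivRange T).toEquiv
  have hpos : 0 < Nat.card (N →ₗ[A] L) := Nat.card_pos
  have c5 : Nat.card T.range = Nat.card (N →ₗ[A] N) := by
    have := c1.symm.trans (c3.trans (by rw [c4, c2]))
    exact (Nat.eq_of_mul_eq_mul_right hpos this).symm
  have htop : T.range = ⊤ := AddSubgroup.eq_top_of_card_eq _ c5
  have : LinearMap.id ∈ T.range := htop ▸ AddSubgroup.mem_top _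
  obtain ⟨g, hg⟩ := this
  exact ⟨g, fun n => LinearMap.congr_fun (hg : p.1.2 ∘ₗ g = LinearMap.id) n⟩

/-- The split extension pair attached to an isomorphism `M ≃ N × L`. -/
noncomputable def splitPair (e : M ≃ₗ[A] (N × L)) : ExtPairs A M N L := by
  refine mk' ((e.symm : N × L →ₗ[A] M) ∘ₗ LinearMap.inr A N L)
    (LinearMap.fst A N L ∘ₗ (e : M →ₗ[A] N × L)) ?_ ?_ ?_
  · exact e.symm.injective.comp LinearMap.inr_injective
  · intro n
    exact ⟨e.symm (n, 0), by simp⟩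
  · ext x
    simp only [LinearMap.mem_range, LinearMap.mem_ker, LinearMap.comp_apply,
      LinearEquiv.coe_coe, LinearMap.fst_apply, LinearMap.inr_apply]
    constructor
    · rintro ⟨l, rfl⟩
      simp
    · intro hx
      refine ⟨(e x).2, ?_⟩
      rw [show ((0 : N), (e x).2) = e x from (Prod.ext hx.symm rfl),
        LinearEquiv.symm_apply_apply]

end Split

section KAct

variable (k : Type*) [Field k] [Module k N] [SMulCommClass A k N]

/-- Scaling the projection of an extension pair by a unit. -/
noncomputable def kscale (c : kˣ) (p : ExtPairs A M N L) : ExtPairs A M N L := by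
  refine mk' p.1.1 ((c : k) • p.1.2) p.2.1 ?_ ?_
  · intro n
    obtain ⟨x, hx⟩ := p.2.2.1 ((c⁻¹ : kˣ) • n)
    refine ⟨x, ?_⟩
    show (c : k) • p.1.2 x = n
    rw [hx, ← Units.smul_def, smul_smul, mul_inv_cancel, one_smul]
  · rw [p.2.2.2]
    ext x
    simp only [LinearMap.mem_ker, LinearMap.smul_apply]
    constructor
    · intro hx
      rw [hx, smul_zero]
    · intro hx
      have : ((c⁻¹ : kˣ) : k) • ((c : k) • p.1.2 x) = p.1.2 x := by
        rw [smul_smul, ← Units.val_mul, inv_mul_cancel, Units.val_one, one_smul]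
      rw [← this, hx, smul_zero]

noncomputable instance kMulAction : MulAction kˣ (ExtClasses A M N L) where
  smul c := Quot.map (kscale k c) (fun p q => by
    rintro ⟨φ, h1, h2⟩
    refine ⟨φ, h1, ?_⟩
    show ((c : k) • q.1.2) ∘ₗ (φ : M →ₗ[A] M) = (c : k) • p.1.2
    rw [LinearMap.smul_comp, h2])
  one_smul := by
    refine Quot.ind (fun p => ?_)
    show Quot.mk _ (kscale k 1 p) = Quot.mk _ p
    congr 1
    apply Subtype.ext
    apply Prod.ext
    · rfl
    · show ((1 : kˣ) : k) • p.1.2 = p.1.2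
      rw [Units.val_one, one_smul]
  mul_smul c d := by
    refine Quot.ind (fun p => ?_)
    show Quot.mk _ (kscale k (c * d) p) = Quot.mk _ (kscale k c (kscale k d p))
    congr 1
    apply Subtype.ext
    apply Prod.ext
    · rfl
    · show ((c * d : kˣ) : k) • p.1.2 = (c : k) • ((d : k) • p.1.2)
      rw [Units.val_mul, smul_smul]

variable [Algebra k A] [Module k M] [IsScalarTower k A M] [IsScalarTower k A N]
  [SMulCommClass A k M]

theorem kstab_triv (hns : ¬ Nonempty (M ≃ₗ[A] (N × L))) (c : kˣ)
    (x : ExtClasses A M N L) (hc : c • x = x) : c = 1 := by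
  by_contra hc1
  induction x using Quot.ind with
  | _ p =>
  have hrel : ExtPairs.Equiv A M N L (kscale k c p) p := by
    have h := Quot.eq.1 (hc : Quot.mk _ (kscale k c p) = Quot.mk _ p)
    exact ((Equivalence.eqvGen_iff (equivalence (A := A))).1 h)
  obtain ⟨φ, h1, h2⟩ := hrel
  have hφι : ∀ l, φ (p.1.1 l) = p.1.1 l := fun l => by
    have := LinearMap.congr_fun h1 l
    simpa [kscale, mk'] using this
  have hπφ : ∀ y, p.1.2 (φ y) = (c : k) • p.1.2 y := fun y => by
    have := LinearMap.congr_fun h2 y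
    simpa [kscale, mk'] using this
  set ψ : M →ₗ[A] M := (φ : M →ₗ[A] M) - LinearMap.id with hψdef
  have hψι : ∀ l, ψ (p.1.1 l) = 0 := fun l => by simp [hψdef, hφι]
  obtain ⟨g, hg⟩ := factorThru p ψ hψι
  have hπg : ∀ n, p.1.2 (g n) = ((c : k) - 1) • n := by
    intro n
    obtain ⟨y, rfl⟩ := p.2.2.1 n
    rw [hg]
    simp only [hψdef, LinearMap.sub_apply, LinearMap.id_apply, map_sub, sub_smul,
      one_smul, LinearEquiv.coe_coe, hπφ]
  have hu : (c : k) - 1 ≠ 0 := by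
    intro h0
    exact hc1 (Units.ext (by rw [Units.val_one, ← sub_eq_zero]; exact h0))
  set g₂ : N →ₗ[A] M := ((c : k) - 1)⁻¹ • g with hg₂
  have hsec : ∀ n, p.1.2 (g₂ n) = n := by
    intro n
    rw [hg₂, LinearMap.smul_apply, ← IsScalarTower.algebraMap_smul A (((c : k) - 1)⁻¹)
      (g n), map_smul, IsScalarTower.algebraMap_smul, hπg, smul_smul,
      inv_mul_cancel₀ hu, one_smul]
  exact hns ⟨(splitEquiv p g₂ hsec).trans (LinearEquiv.prodComm A L N)⟩

theorem card_units_dvd [Finite k] [Finite M] [Finite N] [Finite L]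
    (hns : ¬ Nonempty (M ≃ₗ[A] (N × L))) :
    Nat.card kˣ ∣ Nat.card (ExtClasses A M N L) := by
  have key := card_counting kˣ (ExtClasses A M N L) PUnit.{1} (fun x => by
    have hsub : Subsingleton (MulAction.stabilizer kˣ x) := by
      constructor
      rintro ⟨a, ha⟩ ⟨b, hb⟩
      have ha' := kstab_triv (M := M) k hns a x ha
      have hb' := kstab_triv (M := M) k hns b x hb
      exact Subtype.ext (ha'.trans hb'.symm)
    exact Equiv.punitOfNonemptyOfSubsingleton)
  simp only [Nat.card_eq_fintype_card, Fintype.card_punit, mul_one] at key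
  exact ⟨Nat.card (MulAction.orbitRel.Quotient kˣ (ExtClasses A M N L)), by
    rw [key, mul_comm]⟩

end KAct

end HX
end Aux

theorem smulCommClass_of_tower (k A P : Type*) [CommSemiring k] [Semiring A] [Algebra k A]
    [AddCommMonoid P] [Module k P] [Module A P] [IsScalarTower k A P] :
    SMulCommClass A k P :=
  ⟨fun a c n => by
    rw [← IsScalarTower.algebraMap_smul A c n, ← mul_smul, ← Algebra.commutes c a,
      mul_smul, IsScalarTower.algebraMap_smul]⟩


theorem hallNum_mem_of_ext_dim_le_one
    (q : ℕ) (k : Type) [Field k] [Finite k] (hq : Nat.card k = q)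
    (A : Type) [Ring A] [Algebra k A] [Module.Finite k A]
    (M N L : Type)
    [AddCommGroup M] [Module k M] [Module A M] [IsScalarTower k A M] [Module.Finite k M] [Finite M]
    [AddCommGroup N] [Module k N] [Module A N] [IsScalarTower k A N] [Module.Finite k N] [Finite N]
    [AddCommGroup L] [Module k L] [Module A L] [IsScalarTower k A L] [Module.Finite k L] [Finite L]
    [SMulCommClass A k L]
    (h : ℕ) (hh : Module.finrank k (N →ₗ[A] L) = h)
    -- `dim_k Ext¹_A(N, L) ≤ 1`
    (hext : Module.finrank k
      (((Ext k (ModuleCat A) 1).obj (Opposite.op (ModuleCat.of A N))).obj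
        (ModuleCat.of A L)) ≤ 1) :
    hallNum A M N L * (Nat.card (N ≃ₗ[A] N) * Nat.card (L ≃ₗ[A] L) * q ^ h) = 0 ∨
    hallNum A M N L * (Nat.card (N ≃ₗ[A] N) * Nat.card (L ≃ₗ[A] L) * q ^ h) =
      Nat.card ((N × L) ≃ₗ[A] N × L) ∨
    (¬ Nonempty (M ≃ₗ[A] N × L) ∧ (q - 1) ∣ Nat.card (ExtClasses A M N L) ∧
      hallNum A M N L * (Nat.card (N ≃ₗ[A] N) * Nat.card (L ≃ₗ[A] L) * q ^ h) =
        Nat.card (M ≃ₗ[A] M) * Nat.card (ExtClasses A M N L)) := by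
  haveI hSN : SMulCommClass A k N := smulCommClass_of_tower k A N
  haveI hSM : SMulCommClass A k M := smulCommClass_of_tower k A M
  haveI : Finite (N →ₗ[A] L) :=
    Finite.of_injective (fun f => (f : N → L)) DFunLike.coe_injective
  have hcardHom : Nat.card (N →ₗ[A] L) = q ^ h := by
    haveI := Fintype.ofFinite k
    haveI := Fintype.ofFinite (N →ₗ[A] L)
    rw [Nat.card_eq_fintype_card, Module.card_eq_pow_finrank (K := k) (V := N →ₗ[A] L), hh,
      ← Nat.card_eq_fintype_card, hq]
  have main : hallNum A M N L * (Nat.card (N ≃ₗ[A] N) * Nat.card (L ≃ₗ[A] L) * q ^ h) =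
      Nat.card (M ≃ₗ[A] M) * Nat.card (ExtClasses A M N L) := by
    have h1 := HX.cardE1 (A := A) (M := M) (N := N) (L := L)
    have h2 := HX.cardE2 (A := A) (M := M) (N := N) (L := L)
    rw [hcardHom] at h2
    calc hallNum A M N L * (Nat.card (N ≃ₗ[A] N) * Nat.card (L ≃ₗ[A] L) * q ^ h)
        = (Nat.card {U : Submodule A M //
              Nonempty (U ≃ₗ[A] L) ∧ Nonempty ((M ⧸ U) ≃ₗ[A] N)} *
            (Nat.card (L ≃ₗ[A] L) * Nat.card (N ≃ₗ[A] N))) * q ^ h := by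
          show hallNum A M N L * _ = _
          rw [hallNum]; ring
      _ = Nat.card (ExtPairs A M N L) * q ^ h := by rw [← h1]
      _ = Nat.card (ExtClasses A M N L) * Nat.card (M ≃ₗ[A] M) := h2
      _ = Nat.card (M ≃ₗ[A] M) * Nat.card (ExtClasses A M N L) := mul_comm _ _
  by_cases hiso : Nonempty (M ≃ₗ[A] (N × L))
  · right; left
    obtain ⟨e⟩ := hiso
    have hone : Nat.card (ExtClasses A M N L) = 1 := by
      rw [Nat.card_eq_one_iff_unique]
      constructor
      · refine ⟨fun a b => ?_⟩
        induction a using Quot.ind with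
        | _ p =>
        induction b using Quot.ind with
        | _ p' =>
        obtain ⟨g, hg⟩ := HX.section_of_iso p e
        obtain ⟨g', hg'⟩ := HX.section_of_iso p' e
        exact Quot.sound (HX.equiv_of_sections p p' g g' hg hg')
      · exact ⟨Quot.mk _ (HX.splitPair e)⟩
    have hAut : Nat.card (M ≃ₗ[A] M) = Nat.card ((N × L) ≃ₗ[A] (N × L)) :=
      Nat.card_congr ⟨fun f => (e.symm.trans f).trans e, fun g => (e.trans g).trans e.symm,
        fun f => by ext x; simp, fun g => by ext x <;> simp⟩
    rw [main, hone, mul_one, hAut]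
  · right; right
    refine ⟨hiso, ?_, main⟩
    have hd := HX.card_units_dvd (A := A) (M := M) (N := N) (L := L) k hiso
    have hcu : Nat.card kˣ = q - 1 := by
      haveI := Fintype.ofFinite k
      haveI := Classical.decEq k
      rw [Nat.card_eq_fintype_card, Fintype.card_units, ← Nat.card_eq_fintype_card, hq]
    rwa [hcu] at hd
end

section
/- Let q be a prime power, k a field with q elements, A a finite-dimensional k-algebra, and X, Y non-isomorphic indecomposable finite-dimensional A-modules, M = X ⊕ Y. Then q − 1 divides G^M_{XY} − 1, where G^M_{XY} counts submodules L ⊆ M with L ≅ Y and M/L ≅ X. -/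
/-- A module is indecomposable if it is nonzero and admits no nontrivial
direct sum decomposition. -/
def IsIndecomposableModule (A : Type*) [Ring A] (M : Type*)
    [AddCommGroup M] [Module A M] : Prop :=
  Nontrivial M ∧ ∀ U V : Submodule A M, IsCompl U V → U = ⊥ ∨ V = ⊥


open MulAction in
/-- Abstract counting: a finite group acting on a finite type with a global fixed
point `s₀`, freely away from `s₀`; then `|G|` divides `|S| - 1`. -/
theorem aux_free_count {G S : Type*} [Group G] [Finite G] [Finite S] [MulAction G S]
    (s₀ : S) (hfix : ∀ g : G, g • s₀ = s₀)
    (hfree : ∀ s : S, s ≠ s₀ → ∀ g : G, g • s = s → g = 1) :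
    (Nat.card G : ℤ) ∣ (Nat.card S : ℤ) - 1 := by
  classical
  letI act : MulAction G {s : S // s ≠ s₀} :=
    { smul := fun g s => ⟨g • s.1, fun h => s.2 (by
        have h2 : g⁻¹ • (g • s.1) = g⁻¹ • s₀ := congrArg _ h
        rw [inv_smul_smul] at h2
        rw [h2, hfix g⁻¹])⟩
      one_smul := fun s => Subtype.ext (one_smul G s.1)
      mul_smul := fun g h s => Subtype.ext (mul_smul g h s.1) }
  have hsmul : ∀ (g : G) (s : {s : S // s ≠ s₀}), (g • s).1 = g • s.1 := fun _ _ => rfl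
  have hstab : ∀ t : {s : S // s ≠ s₀}, stabilizer G t = ⊥ := by
    intro t
    rw [Subgroup.eq_bot_iff_forall]
    intro g hg
    have : g • t = t := hg
    exact hfree t.1 t.2 g (congrArg Subtype.val this)
  have e2 : {s : S // s ≠ s₀} ≃ (orbitRel.Quotient G {s : S // s ≠ s₀}) × G :=
    (selfEquivSigmaOrbitsQuotientStabilizer G {s : S // s ≠ s₀}).trans
      ((Equiv.sigmaCongrRight fun ω =>
        (Subgroup.quotientEquivOfEq (hstab _)).trans
          QuotientGroup.quotientBot.toEquiv).trans
        (Equiv.sigmaEquivProd _ _))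
  have hcard : Nat.card {s : S // s ≠ s₀} =
      Nat.card (orbitRel.Quotient G {s : S // s ≠ s₀}) * Nat.card G := by
    rw [Nat.card_congr e2, Nat.card_prod]
  have hone : Nat.card {s : S // s = s₀} = 1 := by
    haveI : Subsingleton {s : S // s = s₀} :=
      ⟨fun a b => Subtype.ext (a.2.trans b.2.symm)⟩
    haveI : Nonempty {s : S // s = s₀} := ⟨⟨s₀, rfl⟩⟩
    exact Nat.card_unique
  have hS : Nat.card S = 1 + Nat.card {s : S // s ≠ s₀} := by
    rw [← hone, ← Nat.card_sum]
    exact (Nat.card_congr (Equiv.sumCompl (· = s₀))).symm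
  refine ⟨(Nat.card (orbitRel.Quotient G {s : S // s ≠ s₀}) : ℤ), ?_⟩
  rw [hS, hcard]
  push_cast
  ring



section HallAux

variable {A : Type} [Ring A]
variable {X Y : Type}
  [AddCommGroup X] [Module A X]
  [AddCommGroup Y] [Module A Y]

/-- A submodule product is linearly equivalent to the product of the submodules. -/
def subProdEquiv (U : Submodule A X) (V : Submodule A Y) :
    ↥(U.prod V) ≃ₗ[A] ↥U × ↥V where
  toFun p := (⟨p.1.1, (Submodule.mem_prod.mp p.2).1⟩, ⟨p.1.2, (Submodule.mem_prod.mp p.2).2⟩)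
  map_add' _ _ := rfl
  map_smul' _ _ := rfl
  invFun uv := ⟨(uv.1.1, uv.2.1), Submodule.mem_prod.mpr ⟨uv.1.2, uv.2.2⟩⟩
  left_inv p := rfl
  right_inv uv := rfl

/-- Dropping a subsingleton factor from a product of modules. -/
def prodUnitLeft {P Q : Type*} [AddCommGroup P] [Module A P] [AddCommGroup Q] [Module A Q]
    [Subsingleton P] : (P × Q) ≃ₗ[A] Q where
  toFun := Prod.snd
  map_add' _ _ := rfl
  map_smul' _ _ := rfl
  invFun q := (0, q)
  left_inv p := Prod.ext (Subsingleton.elim _ _) rfl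
  right_inv q := rfl

/-- The quotient by a product submodule is the product of the quotients. -/
noncomputable def quotProdEquiv (U : Submodule A X) (V : Submodule A Y) :
    ((X × Y) ⧸ U.prod V) ≃ₗ[A] (X ⧸ U) × (Y ⧸ V) := by
  refine (Submodule.quotEquivOfEq (U.prod V) (LinearMap.ker (LinearMap.prodMap U.mkQ V.mkQ))
    ?_).trans ((LinearMap.prodMap U.mkQ V.mkQ).quotKerEquivOfSurjective ?_)
  · rw [LinearMap.ker_prodMap, Submodule.ker_mkQ, Submodule.ker_mkQ]
  · rw [LinearMap.coe_prodMap]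
    exact Prod.map_surjective.mpr ⟨U.mkQ_surjective, V.mkQ_surjective⟩

theorem subsingleton_or_of_prodEquiv {P Q W : Type*} [AddCommGroup P] [Module A P]
    [AddCommGroup Q] [Module A Q] [AddCommGroup W] [Module A W]
    (hW : IsIndecomposableModule A W) (φ : (P × Q) ≃ₗ[A] W) :
    Subsingleton P ∨ Subsingleton Q := by
  have hc : IsCompl ((LinearMap.range (LinearMap.inl A P Q)).map (φ : (P × Q) →ₗ[A] W))
      ((LinearMap.range (LinearMap.inr A P Q)).map (φ : (P × Q) →ₗ[A] W)) := by
    have := (Submodule.orderIsoMapComap φ).isCompl LinearMap.isCompl_range_inl_inr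
    exact this
  rcases hW.2 _ _ hc with h | h
  · left
    refine subsingleton_of_forall_eq 0 fun a => ?_
    have hm : φ (a, 0) ∈ (LinearMap.range (LinearMap.inl A P Q)).map (φ : (P × Q) →ₗ[A] W) :=
      Submodule.mem_map_of_mem ⟨a, rfl⟩
    rw [h, Submodule.mem_bot] at hm
    have : ((a, 0) : P × Q) = 0 := φ.injective (by rw [hm, map_zero])
    exact congrArg Prod.fst this
  · right
    refine subsingleton_of_forall_eq 0 fun b => ?_
    have hm : φ (0, b) ∈ (LinearMap.range (LinearMap.inr A P Q)).map (φ : (P × Q) →ₗ[A] W) :=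
      Submodule.mem_map_of_mem ⟨b, rfl⟩
    rw [h, Submodule.mem_bot] at hm
    have : ((0, b) : P × Q) = 0 := φ.injective (by rw [hm, map_zero])
    exact congrArg Prod.snd this

theorem subsingleton_submodule_eq_bot {P : Submodule A X} (h : Subsingleton ↥P) : P = ⊥ := by
  rw [Submodule.eq_bot_iff]
  intro x hx
  have : (⟨x, hx⟩ : ↥P) = ⟨0, P.zero_mem⟩ := Subsingleton.elim _ _
  exact congrArg Subtype.val this

/-- The key fixed-point identification: a submodule `L ≤ X × Y` with `L ≅ Y`,
`(X × Y)/L ≅ X`, which is "split" in the sense that it contains the second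
components of its elements, must be `⊥ × ⊤`, provided `X`, `Y` are
non-isomorphic indecomposables. -/
theorem fixed_point_eq (hX : IsIndecomposableModule A X) (hY : IsIndecomposableModule A Y)
    (hXY : ¬ Nonempty (X ≃ₗ[A] Y)) (L : Submodule A (X × Y))
    (hL : Nonempty (↥L ≃ₗ[A] Y)) (hQ : Nonempty (((X × Y) ⧸ L) ≃ₗ[A] X))
    (hsplit : ∀ p : X × Y, p ∈ L → ((0 : X), p.2) ∈ L) :
    L = (⊥ : Submodule A X).prod ⊤ := by
  classical
  set U : Submodule A X := L.comap (LinearMap.inl A X Y) with hU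
  set V : Submodule A Y := L.comap (LinearMap.inr A X Y) with hV
  have hLUV : L = U.prod V := by
    ext ⟨a, b⟩
    rw [Submodule.mem_prod, hU, hV, Submodule.mem_comap, Submodule.mem_comap,
      LinearMap.inl_apply, LinearMap.inr_apply]
    constructor
    · intro h
      have h2 : ((0 : X), b) ∈ L := hsplit (a, b) h
      have h3 : ((a, b) - (0, b) : X × Y) ∈ L := sub_mem h h2
      have h4 : ((a, b) - (0, b) : X × Y) = (a, 0) := by
        ext <;> simp
      rw [h4] at h3
      exact ⟨h3, h2⟩
    · rintro ⟨h1, h2⟩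
      have := add_mem h1 h2
      simpa using this
  obtain ⟨e⟩ := hL
  obtain ⟨f⟩ := hQ
  have ψ : (↥U × ↥V) ≃ₗ[A] Y :=
    (subProdEquiv U V).symm.trans ((LinearEquiv.ofEq _ _ hLUV.symm).trans e)
  have χ : ((X ⧸ U) × (Y ⧸ V)) ≃ₗ[A] X :=
    (quotProdEquiv U V).symm.trans
      ((Submodule.quotEquivOfEq (U.prod V) L hLUV.symm).trans f)
  haveI hntX : Nontrivial X := hX.1
  haveI hntY : Nontrivial Y := hY.1
  rcases subsingleton_or_of_prodEquiv hY ψ with hsU | hsV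
  · -- U = ⊥
    have hUbot : U = ⊥ := subsingleton_submodule_eq_bot hsU
    rcases subsingleton_or_of_prodEquiv hX χ with hq1 | hq2
    · exfalso
      have hUtop : U = ⊤ := Submodule.Quotient.subsingleton_iff.mp hq1
      exact absurd (hUbot ▸ hUtop) bot_ne_top
    · have hVtop : V = ⊤ := Submodule.Quotient.subsingleton_iff.mp hq2
      rw [hLUV, hUbot, hVtop]
  · -- V = ⊥ : leads to a contradiction
    exfalso
    have hVbot : V = ⊥ := subsingleton_submodule_eq_bot hsV
    rcases subsingleton_or_of_prodEquiv hX χ with hq1 | hq2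
    · -- U = ⊤, so X ≃ L ≃ Y
      have hUtop : U = ⊤ := Submodule.Quotient.subsingleton_iff.mp hq1
      refine hXY ⟨?_⟩
      exact Submodule.topEquiv.symm.trans ((LinearEquiv.ofEq ⊤ U hUtop.symm).trans
        ((prodUnitLeft (P := ↥V)).symm.trans ((LinearEquiv.prodComm A ↥V ↥U).trans ψ)))
    · have hVtop : V = ⊤ := Submodule.Quotient.subsingleton_iff.mp hq2
      exact absurd (hVbot ▸ hVtop) bot_ne_top

end HallAux


section HallMain

variable {k : Type} [Field k] {A : Type} [Ring A] [Algebra k A]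
variable {X Y : Type}
  [AddCommGroup X] [Module k X] [Module A X] [IsScalarTower k A X]
  [AddCommGroup Y] [Module k Y] [Module A Y] [IsScalarTower k A Y]

/-- The `A`-linear automorphism of `X × Y` scaling the second coordinate by a unit of `k`. -/
def eAut (c : kˣ) : (X × Y) ≃ₗ[A] (X × Y) :=
  (LinearEquiv.refl A X).prodCongr (DistribMulAction.toLinearEquiv A Y c)

@[simp] theorem eAut_apply (c : kˣ) (p : X × Y) : eAut (A := A) c p = (p.1, c • p.2) := rfl

theorem eAut_one : (eAut (1 : kˣ) : (X × Y) ≃ₗ[A] (X × Y)).toLinearMap = LinearMap.id := by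
  refine LinearMap.ext fun p => ?_
  show ((p.1, (1 : kˣ) • p.2) : X × Y) = p
  rw [one_smul]

theorem eAut_mul (c d : kˣ) :
    (eAut (c * d) : (X × Y) ≃ₗ[A] (X × Y)).toLinearMap =
      (eAut c : (X × Y) ≃ₗ[A] (X × Y)).toLinearMap.comp
        (eAut d : (X × Y) ≃ₗ[A] (X × Y)).toLinearMap := by
  refine LinearMap.ext fun p => ?_
  show ((p.1, (c * d) • p.2) : X × Y) = (p.1, c • d • p.2)
  rw [mul_smul]

theorem map_eAut_prod (c : kˣ) :
    ((⊥ : Submodule A X).prod (⊤ : Submodule A Y)).map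
      (eAut c : (X × Y) ≃ₗ[A] (X × Y)).toLinearMap = (⊥ : Submodule A X).prod ⊤ := by
  ext ⟨a, b⟩
  simp only [Submodule.mem_map, Submodule.mem_prod, Submodule.mem_bot, Submodule.mem_top,
    and_true, eAut_apply]
  constructor
  · rintro ⟨⟨x, y⟩, hx, h⟩
    have h1 : x = a := congrArg Prod.fst h
    rw [← h1]; exact hx
  · intro h
    exact ⟨(a, c⁻¹ • b), h, by
      show ((a, c • c⁻¹ • b) : X × Y) = (a, b)
      rw [smul_inv_smul]⟩

end HallMain

section Split

variable {k : Type} [Field k] {A : Type} [Ring A] [Algebra k A]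
variable {X Y : Type}
  [AddCommGroup X] [Module k X] [Module A X] [IsScalarTower k A X]
  [AddCommGroup Y] [Module k Y] [Module A Y] [IsScalarTower k A Y]

theorem split_of_fixed {c : kˣ} (hc : c ≠ 1) {L : Submodule A (X × Y)}
    (hmap : L.map (eAut c : (X × Y) ≃ₗ[A] (X × Y)).toLinearMap = L) :
    ∀ p : X × Y, p ∈ L → ((0 : X), p.2) ∈ L := by
  rintro ⟨x, y⟩ hp
  have h1 : ((x, (c : k) • y) : X × Y) ∈ L := by
    rw [← hmap]
    exact Submodule.mem_map_of_mem hp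
  have h2 : ((0, ((c : k) - 1) • y) : X × Y) ∈ L := by
    have h3 := sub_mem h1 hp
    have h4 : ((x, (c : k) • y) - (x, y) : X × Y) = (0, ((c : k) - 1) • y) := by
      ext
      · show x - x = 0
        rw [sub_self]
      · show (c : k) • y - y = ((c : k) - 1) • y
        rw [sub_smul, one_smul]
    rwa [h4] at h3
  have hc1 : (c : k) - 1 ≠ 0 := sub_ne_zero.mpr (fun h => hc (Units.ext h))
  have h5 := L.smul_mem (algebraMap k A (((c : k) - 1)⁻¹)) h2
  rw [algebraMap_smul] at h5
  have h6 : (((c : k) - 1)⁻¹ • ((0, ((c : k) - 1) • y) : X × Y)) = ((0 : X), y) := by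
    ext
    · show ((c : k) - 1)⁻¹ • (0 : X) = 0
      rw [smul_zero]
    · show ((c : k) - 1)⁻¹ • ((c : k) - 1) • y = y
      rw [smul_smul, inv_mul_cancel₀ hc1, one_smul]
  rwa [h6] at h5

end Split


set_option maxHeartbeats 1000000 in
/-- Lemma 5.1(2), case `X ≇ Y`: over a finite field `k` with `q` elements, for
non-isomorphic indecomposables `X`, `Y` and `M = X ⊕ Y`, one has
`q − 1 ∣ G^{X⊕Y}_{XY} − 1`. -/
theorem sub_one_dvd_hallNum_split_sub_one
    (q : ℕ) (k : Type) [Field k] [Finite k] (hq : Nat.card k = q)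
    (A : Type) [Ring A] [Algebra k A] [Module.Finite k A]
    (X Y : Type)
    [AddCommGroup X] [Module k X] [Module A X] [IsScalarTower k A X] [Module.Finite k X]
    [AddCommGroup Y] [Module k Y] [Module A Y] [IsScalarTower k A Y] [Module.Finite k Y]
    (hX : IsIndecomposableModule A X) (hY : IsIndecomposableModule A Y)
    (hXY : ¬ Nonempty (X ≃ₗ[A] Y)) :
    ((q : ℤ) - 1) ∣ (hallNum A (X × Y) X Y : ℤ) - 1 := by
  classical
  haveI : Finite X := Module.finite_of_finite k
  haveI : Finite Y := Module.finite_of_finite k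
  haveI : Finite (Submodule A (X × Y)) :=
    Finite.of_injective (fun U => (U : Set (X × Y))) SetLike.coe_injective
  set S := {U : Submodule A (X × Y) //
    Nonempty (↥U ≃ₗ[A] Y) ∧ Nonempty (((X × Y) ⧸ U) ≃ₗ[A] X)} with hSdef
  have hcardS : hallNum A (X × Y) X Y = Nat.card S := rfl
  letI smulInst : SMul kˣ S := ⟨fun c U =>
    ⟨U.1.map (eAut c : (X × Y) ≃ₗ[A] (X × Y)).toLinearMap,
      ⟨((eAut c : (X × Y) ≃ₗ[A] (X × Y)).submoduleMap U.1).symm.trans U.2.1.some⟩,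
      ⟨(Submodule.Quotient.equiv U.1 _ (eAut c) rfl).symm.trans U.2.2.some⟩⟩⟩
  letI mulInst : MulAction kˣ S :=
    { one_smul := fun U => Subtype.ext (by
        show U.1.map _ = U.1
        rw [eAut_one, Submodule.map_id])
      mul_smul := fun c d U => Subtype.ext (by
        show U.1.map _ = (U.1.map _).map _
        rw [eAut_mul, Submodule.map_comp]) }
  haveI hq_top : Subsingleton (Y ⧸ (⊤ : Submodule A Y)) :=
    Submodule.Quotient.subsingleton_iff.mpr rfl
  let eY : ↥((⊥ : Submodule A X).prod (⊤ : Submodule A Y)) ≃ₗ[A] Y :=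
    (subProdEquiv ⊥ ⊤).trans (prodUnitLeft.trans Submodule.topEquiv)
  let eX : ((X × Y) ⧸ (⊥ : Submodule A X).prod (⊤ : Submodule A Y)) ≃ₗ[A] X :=
    (quotProdEquiv ⊥ ⊤).trans ((LinearEquiv.prodComm A _ _).trans
      (prodUnitLeft.trans (Submodule.quotEquivOfEqBot ⊥ rfl)))
  let s₀ : S := ⟨(⊥ : Submodule A X).prod ⊤, ⟨eY⟩, ⟨eX⟩⟩
  have hfix : ∀ c : kˣ, c • s₀ = s₀ := fun c => Subtype.ext (map_eAut_prod c)
  have hfree : ∀ s : S, s ≠ s₀ → ∀ c : kˣ, c • s = s → c = 1 := by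
    intro s hs c hcs
    by_contra hc
    refine hs (Subtype.ext ?_)
    exact fixed_point_eq hX hY hXY s.1 s.2.1 s.2.2
      (split_of_fixed hc (congrArg Subtype.val hcs))
  have hdvd := aux_free_count s₀ hfix hfree
  have hq1 : 1 ≤ q := by
    rw [← hq]
    exact Nat.card_pos
  have hu : Nat.card kˣ = q - 1 := by rw [Nat.card_units, hq]
  have hcast : ((q : ℤ) - 1) = ((q - 1 : ℕ) : ℤ) := by
    rw [Nat.cast_sub hq1, Nat.cast_one]
  rw [hcardS, hcast, ← hu]
  exact hdvd
end

section
/- Let q be a prime power, k a field with q elements, A a finite-dimensional k-algebra, and X an indecomposable finite-dimensional A-module, M = X ⊕ X. Then q − 1 divides G^M_{XX} − 2, where G^M_{XX} counts submodules L ⊆ M with L ≅ X and M/L ≅ X. -/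
section HallAux

variable {k : Type} [Field k] {A : Type} [Ring A] [Algebra k A]
variable {X : Type} [AddCommGroup X] [Module k X] [Module A X] [IsScalarTower k A X]

private lemma kA_smul_comm (c : k) (a : A) (x : X) : a • c • x = c • a • x := by
  rw [← algebraMap_smul A c x, ← algebraMap_smul A c (a • x), ← mul_smul, ← mul_smul,
    Algebra.commutes]

private lemma kA_smulMem {Y : Type} [AddCommGroup Y] [Module k Y] [Module A Y]
    [IsScalarTower k A Y] (U : Submodule A Y) (c : k) {y : Y} (hy : y ∈ U) : c • y ∈ U := by
  rw [← algebraMap_smul A c y]; exact U.smul_mem _ hy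

private def eAux (c : kˣ) : (X × X) ≃ₗ[A] (X × X) where
  toFun p := ((c : k) • p.1, p.2)
  map_add' p q := by simp [smul_add, Prod.ext_iff]
  map_smul' a p := by simp [Prod.ext_iff, kA_smul_comm]
  invFun p := (((c⁻¹ : kˣ) : k) • p.1, p.2)
  left_inv p := by simp [smul_smul, ← Units.val_mul]
  right_inv p := by simp [smul_smul, ← Units.val_mul]

private lemma eAux_apply (c : kˣ) (p : X × X) : eAux (A := A) c p = ((c : k) • p.1, p.2) := rfl

private lemma eAux_symm_apply (c : kˣ) (p : X × X) :
    (eAux (A := A) c).symm p = (((c⁻¹ : kˣ) : k) • p.1, p.2) := rfl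

-- new part
private lemma units_smul_eq_zero (c : kˣ) (x : X) : (c : k) • x = 0 ↔ x = 0 := by
  constructor
  · intro h
    have := congrArg (fun y => ((c⁻¹ : kˣ) : k) • y) h
    simpa [smul_smul, ← Units.val_mul] using this
  · intro h; simp [h]

private lemma fixed_mem (c : kˣ) (hc : (c : k) ≠ 1) (U : Submodule A (X × X))
    (hfix : U.map (eAux c).toLinearMap = U) {p : X × X} (hp : p ∈ U) :
    ((p.1, 0) : X × X) ∈ U ∧ ((0, p.2) : X × X) ∈ U := by
  have h1 : (((c : k) • p.1, p.2) : X × X) ∈ U := by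
    rw [← hfix]; exact ⟨p, hp, rfl⟩
  have h2 : ((((c : k) - 1) • p.1, (0 : X)) : X × X) ∈ U := by
    have h := U.sub_mem h1 hp
    have : (((c : k) • p.1, p.2) : X × X) - p = ((((c : k) - 1) • p.1, (0 : X)) : X × X) := by
      simp [Prod.ext_iff, sub_smul]
    rwa [this] at h
  have hne : (c : k) - 1 ≠ 0 := sub_ne_zero.mpr hc
  have h3 : ((p.1, (0 : X)) : X × X) ∈ U := by
    have h := kA_smulMem U ((c : k) - 1)⁻¹ h2
    have heq : (((c : k) - 1)⁻¹ : k) • ((((c : k) - 1) • p.1, (0 : X)) : X × X)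
        = ((p.1, (0 : X)) : X × X) := by
      simp [Prod.smul_def, smul_smul, inv_mul_cancel₀ hne]
    rwa [heq] at h
  refine ⟨h3, ?_⟩
  have h := U.sub_mem hp h3
  have heq : p - ((p.1, 0) : X × X) = ((0, p.2) : X × X) := by simp [Prod.ext_iff]
  rwa [heq] at h

private lemma map_eAux_range_inl (c : kˣ) :
    (LinearMap.range (LinearMap.inl A X X)).map (eAux (k := k) c).toLinearMap
      = LinearMap.range (LinearMap.inl A X X) := by
  rw [LinearMap.range_inl]
  apply le_antisymm
  · rintro p ⟨q, hq, rfl⟩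
    simp only [LinearMap.mem_ker, LinearMap.snd_apply] at hq ⊢
    simpa [eAux_apply] using hq
  · intro p hp
    simp only [LinearMap.mem_ker, LinearMap.snd_apply] at hp
    exact ⟨(eAux c).symm p, by simp [eAux_symm_apply, LinearMap.mem_ker, hp],
      (eAux c).apply_symm_apply p⟩

private lemma map_eAux_range_inr (c : kˣ) :
    (LinearMap.range (LinearMap.inr A X X)).map (eAux (k := k) c).toLinearMap
      = LinearMap.range (LinearMap.inr A X X) := by
  rw [LinearMap.range_inr]
  apply le_antisymm
  · rintro p ⟨q, hq, rfl⟩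
    simp only [SetLike.mem_coe, LinearMap.mem_ker, LinearMap.fst_apply] at hq ⊢
    simp [eAux_apply, units_smul_eq_zero, hq]
  · intro p hp
    simp only [LinearMap.mem_ker, LinearMap.fst_apply] at hp
    exact ⟨(eAux c).symm p, by simp [eAux_symm_apply, LinearMap.mem_ker, hp],
      (eAux c).apply_symm_apply p⟩

private lemma fixed_classification [Finite X] (hX : IsIndecomposableModule A X)
    (c : kˣ) (hc : (c : k) ≠ 1) (U : Submodule A (X × X))
    (hU : Nonempty (U ≃ₗ[A] X))
    (hfix : U.map (eAux c).toLinearMap = U) :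
    U = LinearMap.range (LinearMap.inl A X X) ∨ U = LinearMap.range (LinearMap.inr A X X) := by
  set U₁ : Submodule A X := U.comap (LinearMap.inl A X X) with hU₁def
  set U₂ : Submodule A X := U.comap (LinearMap.inr A X X) with hU₂def
  have hmem : ∀ p ∈ U, ((p.1, 0) : X × X) ∈ U ∧ ((0, p.2) : X × X) ∈ U :=
    fun p hp => fixed_mem c hc U hfix hp
  obtain ⟨f⟩ := hU
  -- the two coordinate pieces, seen inside U
  set W₁ : Submodule A U := (U₁.prod ⊥).comap U.subtype with hW₁def
  set W₂ : Submodule A U := ((⊥ : Submodule A X).prod U₂).comap U.subtype with hW₂def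
  have memW₁ : ∀ u : U, u ∈ W₁ ↔ ((u : X × X).1 ∈ U₁ ∧ (u : X × X).2 = 0) := by
    intro u
    simp [hW₁def, Submodule.mem_comap, Submodule.mem_prod, Submodule.mem_bot]
  have memW₂ : ∀ u : U, u ∈ W₂ ↔ ((u : X × X).1 = 0 ∧ (u : X × X).2 ∈ U₂) := by
    intro u
    simp [hW₂def, Submodule.mem_comap, Submodule.mem_prod, Submodule.mem_bot]
  have hW : IsCompl W₁ W₂ := by
    constructor
    · rw [disjoint_iff, eq_bot_iff]
      intro u hu
      obtain ⟨h1, h2⟩ := Submodule.mem_inf.mp hu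
      rw [memW₁] at h1
      rw [memW₂] at h2
      have : (u : X × X) = 0 := Prod.ext h2.1 h1.2
      rw [Submodule.mem_bot]
      exact Subtype.ext this
    · rw [codisjoint_iff, eq_top_iff]
      intro u _
      have h1 : ((((u : X × X).1, 0) : X × X)) ∈ U := (hmem _ u.2).1
      have h2 : ((((0 : X), (u : X × X).2) : X × X)) ∈ U := (hmem _ u.2).2
      have hu1 : (⟨((u : X × X).1, 0), h1⟩ : U) ∈ W₁ := by
        rw [memW₁]
        exact ⟨by simpa [hU₁def, Submodule.mem_comap] using h1, rfl⟩
      have hu2 : (⟨(0, (u : X × X).2), h2⟩ : U) ∈ W₂ := by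
        rw [memW₂]
        exact ⟨rfl, by simpa [hU₂def, Submodule.mem_comap] using h2⟩
      have : u = (⟨((u : X × X).1, 0), h1⟩ : U) + ⟨(0, (u : X × X).2), h2⟩ := by
        apply Subtype.ext
        simp [Prod.ext_iff]
      rw [this]
      exact Submodule.add_mem_sup hu1 hu2
  have hcompl : IsCompl ((Submodule.orderIsoMapComap f) W₁) ((Submodule.orderIsoMapComap f) W₂) :=
    (Submodule.orderIsoMapComap f).isCompl hW
  have botiff : ∀ W : Submodule A U, (Submodule.orderIsoMapComap f) W = ⊥ → W = ⊥ := by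
    intro W hW'
    have := congrArg (Submodule.orderIsoMapComap f).symm hW'
    rwa [OrderIso.symm_apply_apply, OrderIso.map_bot] at this
  have hbot : W₁ = ⊥ ∨ W₂ = ⊥ := by
    rcases hX.2 _ _ hcompl with h | h
    · exact Or.inl (botiff _ h)
    · exact Or.inr (botiff _ h)
  -- the submodule is full in the remaining coordinate, by a counting argument
  have hcard : Nat.card U = Nat.card X := Nat.card_congr f.toEquiv
  rcases hbot with h | h
  · -- W₁ = ⊥, so U₁ = ⊥ and U = ⊥.prod U₂ = range inr
    right
    have hU₁ : U₁ = ⊥ := by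
      rw [eq_bot_iff]
      intro x hx
      have hxU : ((x, (0 : X)) : X × X) ∈ U := by simpa [hU₁def, Submodule.mem_comap] using hx
      have : (⟨(x, 0), hxU⟩ : U) ∈ W₁ := by
        rw [memW₁]
        exact ⟨hx, rfl⟩
      rw [h] at this
      rw [Submodule.mem_bot] at this ⊢
      have h0 : ((x, (0 : X)) : X × X) = 0 := congrArg Subtype.val this
      exact (Prod.ext_iff.mp h0).1
    have hsub : U ≤ LinearMap.range (LinearMap.inr A X X) := by
      intro p hp
      rw [LinearMap.range_inr, LinearMap.mem_ker, LinearMap.fst_apply]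
      have hx : p.1 ∈ U₁ := by
        rw [hU₁def, Submodule.mem_comap]
        exact (hmem p hp).1
      rw [hU₁, Submodule.mem_bot] at hx
      exact hx
    have hcard2 : Nat.card (LinearMap.range (LinearMap.inr A X X)) = Nat.card X :=
      Nat.card_congr
        (LinearEquiv.ofInjective (LinearMap.inr A X X) LinearMap.inr_injective).toEquiv.symm
    have hsets : (U : Set (X × X)) = (LinearMap.range (LinearMap.inr A X X) : Set (X × X)) := by
      apply Set.eq_of_subset_of_ncard_le hsub
      · rw [← Nat.card_coe_set_eq, ← Nat.card_coe_set_eq]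
        exact le_of_eq (hcard2.trans hcard.symm)
    exact SetLike.ext' hsets
  · left
    have hU₂ : U₂ = ⊥ := by
      rw [eq_bot_iff]
      intro x hx
      have hxU : (((0 : X), x) : X × X) ∈ U := by simpa [hU₂def, Submodule.mem_comap] using hx
      have hmemW : (⟨(0, x), hxU⟩ : U) ∈ W₂ := by
        rw [memW₂]
        exact ⟨rfl, hx⟩
      rw [h] at hmemW
      rw [Submodule.mem_bot] at hmemW ⊢
      have h0 : (((0 : X), x) : X × X) = 0 := congrArg Subtype.val hmemW
      exact (Prod.ext_iff.mp h0).2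
    have hsub : U ≤ LinearMap.range (LinearMap.inl A X X) := by
      intro p hp
      rw [LinearMap.range_inl, LinearMap.mem_ker, LinearMap.snd_apply]
      have hx : p.2 ∈ U₂ := by
        rw [hU₂def, Submodule.mem_comap]
        exact (hmem p hp).2
      rw [hU₂, Submodule.mem_bot] at hx
      exact hx
    have hcard2 : Nat.card (LinearMap.range (LinearMap.inl A X X)) = Nat.card X :=
      Nat.card_congr
        (LinearEquiv.ofInjective (LinearMap.inl A X X) LinearMap.inl_injective).toEquiv.symm
    have hsets : (U : Set (X × X)) = (LinearMap.range (LinearMap.inl A X X) : Set (X × X)) := by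
      apply Set.eq_of_subset_of_ncard_le hsub
      · rw [← Nat.card_coe_set_eq, ← Nat.card_coe_set_eq]
        exact le_of_eq (hcard2.trans hcard.symm)
    exact SetLike.ext' hsets

private lemma map_eAux_one (U : Submodule A (X × X)) :
    U.map (eAux (k := k) 1).toLinearMap = U := by
  have h : (eAux (k := k) (A := A) (X := X) 1).toLinearMap = LinearMap.id := by
    refine LinearMap.ext fun p => ?_
    simp [eAux_apply]
  rw [h, Submodule.map_id]

private lemma map_eAux_mul (c d : kˣ) (U : Submodule A (X × X)) :
    U.map (eAux (c * d)).toLinearMap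
      = (U.map (eAux d).toLinearMap).map (eAux c).toLinearMap := by
  rw [← Submodule.map_comp]
  congr 1
  refine LinearMap.ext fun p => ?_
  simp [eAux_apply, mul_smul]

private lemma mapS (c : kˣ) (U : Submodule A (X × X))
    (h : Nonempty (U ≃ₗ[A] X) ∧ Nonempty (((X × X) ⧸ U) ≃ₗ[A] X)) :
    Nonempty (U.map (eAux c).toLinearMap ≃ₗ[A] X) ∧
      Nonempty (((X × X) ⧸ U.map (eAux c).toLinearMap) ≃ₗ[A] X) := by
  obtain ⟨⟨f⟩, ⟨g⟩⟩ := h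
  exact ⟨⟨((eAux c).submoduleMap U).symm.trans f⟩,
    ⟨(Submodule.Quotient.equiv U _ (eAux c) rfl).symm.trans g⟩⟩

end HallAux


open MulAction in
/-- Lemma 5.1(2), case `X ≅ Y`: over a finite field `k` with `q` elements, for an
indecomposable `X` and `M = X ⊕ X`, one has `q − 1 ∣ G^{X⊕X}_{XX} − 2`. -/
theorem sub_one_dvd_hallNum_split_sub_two
    (q : ℕ) (k : Type) [Field k] [Finite k] (hq : Nat.card k = q)
    (A : Type) [Ring A] [Algebra k A] [Module.Finite k A]
    (X : Type)
    [AddCommGroup X] [Module k X] [Module A X] [IsScalarTower k A X] [Module.Finite k X]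
    (hX : IsIndecomposableModule A X) :
    ((q : ℤ) - 1) ∣ (hallNum A (X × X) X X : ℤ) - 2 := by
  classical
  haveI : Finite X := Module.finite_of_finite k
  haveI : Nontrivial X := hX.1
  have hq2 : 2 ≤ q := by
    rw [← hq]
    exact Finite.one_lt_card_iff_nontrivial.mpr inferInstance
  rcases eq_or_lt_of_le hq2 with h2 | h3
  · rw [← h2]
    norm_num
  -- now q ≥ 3
  have hcu : Nat.card kˣ = q - 1 := by rw [Nat.card_units, hq]
  haveI : Finite (Submodule A (X × X)) :=
    Finite.of_injective (fun U => (U : Set (X × X))) SetLike.coe_injective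
  show ((q : ℤ) - 1) ∣
    (Nat.card {U : Submodule A (X × X) //
        Nonempty (U ≃ₗ[A] X) ∧ Nonempty (((X × X) ⧸ U) ≃ₗ[A] X)} : ℤ) - 2
  set m := q - 1 with hm
  set S := {U : Submodule A (X × X) //
      Nonempty (U ≃ₗ[A] X) ∧ Nonempty (((X × X) ⧸ U) ≃ₗ[A] X)} with hS
  letI : MulAction kˣ S :=
    { smul := fun c U => ⟨U.1.map (eAux c).toLinearMap, mapS c U.1 U.2⟩
      one_smul := fun U => Subtype.ext (map_eAux_one U.1)
      mul_smul := fun c d U => Subtype.ext (map_eAux_mul c d U.1) }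
  -- the two distinguished elements
  have hv₁mem : Nonempty (↥(LinearMap.range (LinearMap.inl A X X)) ≃ₗ[A] X) ∧
      Nonempty (((X × X) ⧸ LinearMap.range (LinearMap.inl A X X)) ≃ₗ[A] X) :=
    ⟨⟨(LinearEquiv.ofInjective (LinearMap.inl A X X) LinearMap.inl_injective).symm⟩,
      ⟨(Submodule.quotientEquivOfIsCompl _ _ LinearMap.isCompl_range_inl_inr).trans
        (LinearEquiv.ofInjective (LinearMap.inr A X X) LinearMap.inr_injective).symm⟩⟩
  have hv₂mem : Nonempty (↥(LinearMap.range (LinearMap.inr A X X)) ≃ₗ[A] X) ∧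
      Nonempty (((X × X) ⧸ LinearMap.range (LinearMap.inr A X X)) ≃ₗ[A] X) :=
    ⟨⟨(LinearEquiv.ofInjective (LinearMap.inr A X X) LinearMap.inr_injective).symm⟩,
      ⟨(Submodule.quotientEquivOfIsCompl _ _ LinearMap.isCompl_range_inl_inr.symm).trans
        (LinearEquiv.ofInjective (LinearMap.inl A X X) LinearMap.inl_injective).symm⟩⟩
  set v₁ : S := ⟨LinearMap.range (LinearMap.inl A X X), hv₁mem⟩ with hv₁
  set v₂ : S := ⟨LinearMap.range (LinearMap.inr A X X), hv₂mem⟩ with hv₂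
  have hv12 : v₁ ≠ v₂ := by
    intro hcon
    obtain ⟨x, hx⟩ := exists_ne (0 : X)
    have h1 : ((x, 0) : X × X) ∈ LinearMap.range (LinearMap.inl A X X) := ⟨x, rfl⟩
    have heq : LinearMap.range (LinearMap.inl A X X) = LinearMap.range (LinearMap.inr A X X) :=
      congrArg Subtype.val hcon
    rw [heq, LinearMap.range_inr, LinearMap.mem_ker, LinearMap.fst_apply] at h1
    exact hx h1
  have hfix1 : ∀ c : kˣ, c • v₁ = v₁ := fun c => Subtype.ext (map_eAux_range_inl c)
  have hfix2 : ∀ c : kˣ, c • v₂ = v₂ := fun c => Subtype.ext (map_eAux_range_inr c)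
  have hclass : ∀ (U : S) (c : kˣ), c ≠ 1 → c • U = U → U = v₁ ∨ U = v₂ := by
    intro U c hc hfixU
    have hc' : (c : k) ≠ 1 := fun h => hc (Units.ext h)
    rcases fixed_classification hX c hc' U.1 U.2.1 (congrArg Subtype.val hfixU) with h | h
    · exact Or.inl (Subtype.ext h)
    · exact Or.inr (Subtype.ext h)
  have horb1 : orbit kˣ v₁ = {v₁} := by
    ext b
    constructor
    · rintro ⟨c, rfl⟩
      simp [hfix1 c]
    · rintro rfl
      exact mem_orbit_self _
  have horb2 : orbit kˣ v₂ = {v₂} := by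
    ext b
    constructor
    · rintro ⟨c, rfl⟩
      simp [hfix2 c]
    · rintro rfl
      exact mem_orbit_self _
  -- orbit counting
  letI : Fintype S := Fintype.ofFinite S
  letI : Fintype (orbitRel.Quotient kˣ S) := Fintype.ofFinite _
  have houtsingle : ∀ v : S, orbit kˣ v = {v} →
      ∀ ω : orbitRel.Quotient kˣ S, ω = Quotient.mk'' v → ω.out = v := by
    intro v hv ω hω
    have h1 : (Quotient.mk'' ω.out : orbitRel.Quotient kˣ S) = Quotient.mk'' v := by
      rw [Quotient.out_eq', hω]
    have h2 : ω.out ∈ orbit kˣ v := by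
      rw [← orbitRel_apply]
      exact Quotient.eq''.mp h1
    rw [hv] at h2
    exact h2
  have key : ∀ ω : orbitRel.Quotient kˣ S,
      (Fintype.card (orbit kˣ ω.out) : ZMod m)
        = if ω = Quotient.mk'' v₁ ∨ ω = Quotient.mk'' v₂ then 1 else 0 := by
    intro ω
    by_cases hP : ω = Quotient.mk'' v₁ ∨ ω = Quotient.mk'' v₂
    · rw [if_pos hP]
      have : orbit kˣ ω.out = {ω.out} := by
        rcases hP with h | h
        · rw [houtsingle v₁ horb1 ω h]; exact horb1
        · rw [houtsingle v₂ horb2 ω h]; exact horb2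
      rw [this]
      simp
    · rw [if_neg hP]
      push_neg at hP
      have hstab : stabilizer kˣ ω.out = ⊥ := by
        rw [eq_bot_iff]
        intro c hc
        rw [Subgroup.mem_bot]
        by_contra hne
        rcases hclass ω.out c hne (mem_stabilizer_iff.mp hc) with h | h
        · exact hP.1 (by rw [← Quotient.out_eq' ω, h])
        · exact hP.2 (by rw [← Quotient.out_eq' ω, h])
      have hcard : Fintype.card (orbit kˣ ω.out) = Nat.card kˣ := by
        rw [← Nat.card_eq_fintype_card, Nat.card_congr (orbitEquivQuotientStabilizer kˣ ω.out),
          hstab]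
        exact Nat.card_congr (QuotientGroup.quotientBot (G := kˣ)).toEquiv
      rw [hcard, hcu]
      exact ZMod.natCast_self m
  have hmkne : (Quotient.mk'' v₁ : orbitRel.Quotient kˣ S) ≠ Quotient.mk'' v₂ := by
    intro hcon
    have h2 : v₁ ∈ orbit kˣ v₂ := by
      rw [← orbitRel_apply]
      exact Quotient.eq''.mp hcon
    rw [horb2] at h2
    exact hv12 h2
  have hall : (Nat.card S : ZMod m) = 2 := by
    rw [Nat.card_congr (selfEquivSigmaOrbits kˣ S), Nat.card_eq_fintype_card,
      Fintype.card_sigma, Nat.cast_sum]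
    rw [Finset.sum_congr rfl fun ω _ => key ω]
    rw [Finset.sum_boole]
    have hfilter : Finset.univ.filter
        (fun ω : orbitRel.Quotient kˣ S => ω = Quotient.mk'' v₁ ∨ ω = Quotient.mk'' v₂)
        = {Quotient.mk'' v₁, Quotient.mk'' v₂} := by
      ext ω
      simp [Finset.mem_filter, Finset.mem_insert, Finset.mem_singleton]
    rw [hfilter, Finset.card_pair hmkne]
    norm_num
  have hfinal : ((Nat.card S : ℤ) : ZMod m) = ((2 : ℤ) : ZMod m) := by
    push_cast
    exact_mod_cast hall
  have hmod := (ZMod.intCast_eq_intCast_iff _ _ _).mp hfinal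
  have hdvd : ((m : ℕ) : ℤ) ∣ (Nat.card S : ℤ) - 2 := Int.ModEq.dvd hmod.symm
  have hcast : ((m : ℕ) : ℤ) = (q : ℤ) - 1 := by
    rw [hm]
    push_cast [Nat.cast_sub (by omega : 1 ≤ q)]
    ring
  rwa [hcast] at hdvd
end

section
/- Let L be a free Z-module with basis {u_N} indexed by a set I of 'indecomposables', sitting inside an associative Z-algebra H with basis indexed by multisets of I (isomorphism classes of direct sums). Suppose that for all distinct basis indices X ≠ Y, the products satisfy u_X · u_Y = Σ_{Z ∈ I} a^Z_{XY} u_Z + u_{X⊕Y} and u_Y · u_X = Σ_{Z ∈ I} a^Z_{YX} u_Z + u_{X⊕Y} with integer coefficients, and u_X · u_X = Σ_{Z ∈ I} a^Z_{XX} u_Z + 2 u_{X⊕X}. Then L is closed under the commutator bracket [x,y] = xy − yx, i.e., L is a Lie subalgebra of H. -/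
/-- The abstract mechanism behind Theorem 5.2: let `H` be an associative ring with a
linearly independent family `w` indexed by multisets of a set `I` of "indecomposables"
(isomorphism classes of direct sums), `u X = w {X}` being the indecomposable basis
elements. If for all `X ≠ Y` the products `u X * u Y` and `u Y * u X` are an integral
combination of indecomposables plus the decomposable term `w {X, Y}`, and
`u X * u X` is an integral combination of indecomposables plus `2 • w {X, X}`, then
the span `L` of the indecomposables is closed under the commutator bracket, i.e. `L`
is a Lie subalgebra of `H`. -/
theorem span_indecomposables_closed_under_commutator
    (H : Type*) [Ring H] (I : Type*)
    (w : Multiset I → H) (u : I → H)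
    (hbasis : LinearIndependent ℤ w)
    (hu : ∀ X : I, u X = w {X})
    (hmul : ∀ X Y : I, X ≠ Y →
      (∃ c : I →₀ ℤ, u X * u Y = (c.sum fun Z n => n • u Z) + w {X, Y}) ∧
      (∃ c : I →₀ ℤ, u Y * u X = (c.sum fun Z n => n • u Z) + w {X, Y}))
    (hsq : ∀ X : I, ∃ c : I →₀ ℤ,
      u X * u X = (c.sum fun Z n => n • u Z) + 2 • w {X, X}) :
    ∀ x ∈ Submodule.span ℤ (Set.range u), ∀ y ∈ Submodule.span ℤ (Set.range u),
      x * y - y * x ∈ Submodule.span ℤ (Set.range u) := by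
  have key : ∀ X Y : I, u X * u Y - u Y * u X ∈ Submodule.span ℤ (Set.range u) := by
    intro X Y
    rcases eq_or_ne X Y with rfl | h
    · simp
    · obtain ⟨⟨c, hc⟩, ⟨c', hc'⟩⟩ := hmul X Y h
      rw [hc, hc', add_sub_add_right_eq_sub]
      refine sub_mem ?_ ?_ <;>
        exact Submodule.sum_mem _ fun Z _ =>
          Submodule.smul_mem _ _ (Submodule.subset_span ⟨Z, rfl⟩)
  intro x hx
  induction hx using Submodule.span_induction with
  | mem a ha =>
    intro y hy
    induction hy using Submodule.span_induction with
    | mem b hb =>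
      obtain ⟨X, rfl⟩ := ha
      obtain ⟨Y, rfl⟩ := hb
      exact key X Y
    | zero => simpa using Submodule.zero_mem _
    | add y z hy hz ihy ihz =>
      have : a * (y + z) - (y + z) * a = (a * y - y * a) + (a * z - z * a) := by noncomm_ring
      rw [this]; exact add_mem ihy ihz
    | smul n y hy ih =>
      have : a * (n • y) - (n • y) * a = n • (a * y - y * a) := by
        rw [mul_smul_comm, smul_mul_assoc, smul_sub]
      rw [this]; exact Submodule.smul_mem _ _ ih
  | zero => intro y hy; simpa using Submodule.zero_mem _
  | add x z hx hz ihx ihz =>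
    intro y hy
    have : (x + z) * y - y * (x + z) = (x * y - y * x) + (z * y - y * z) := by noncomm_ring
    rw [this]; exact add_mem (ihx y hy) (ihz y hy)
  | smul n x hx ih =>
    intro y hy
    have : (n • x) * y - y * (n • x) = n • (x * y - y * x) := by
      rw [mul_smul_comm, smul_mul_assoc, smul_sub]
    rw [this]; exact Submodule.smul_mem _ _ (ih y hy)
end
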